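/- arXiv:1412.4376 — 6 statements merged into one kernel-verified Lean document; each statement's English description precedes it below -/
import Mathlib

section
/- Let α be a real number, let r ∈ {0,1} with α > r, and let φ : (0,1) → [0,∞) be measurable with ∫₀¹ x^{3−2r} φ(x)² dx < ∞. Then ∫₀¹ x^{2α−2r−1} (∫ₓ¹ y^{1−α} φ(y) dy)² dx ≤ (α−r)^{−2} ∫₀¹ x^{3−2r} φ(x)² dx. -/
open MeasureTheory Set
open scoped ENNReal

private lemma measurable_rpow_const' (c : ℝ) : Measurable fun x : ℝ => x ^ c := by
  have h : (fun x : ℝ => x ^ c) = fun x =>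
      if x = 0 then (if c = 0 then (1:ℝ) else 0)
      else if x < 0 then Real.exp (Real.log x * c) * Real.cos (c * Real.pi)
      else Real.exp (Real.log x * c) := by
    funext x
    rcases lt_trichotomy x 0 with hx | hx | hx
    · rw [if_neg hx.ne, if_pos hx, Real.rpow_def_of_neg hx]
    · subst hx
      rcases eq_or_ne c 0 with hc | hc
      · simp [hc]
      · simp [Real.zero_rpow hc, hc]
    · rw [if_neg hx.ne', if_neg (not_lt.mpr hx.le), Real.rpow_def_of_pos hx]
  rw [h]
  refine Measurable.ite (MeasurableSet.singleton 0) measurable_const ?_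
  refine Measurable.ite measurableSet_Iio ?_ ?_
  · exact ((Real.measurable_log.mul_const c).exp).mul_const _
  · exact (Real.measurable_log.mul_const c).exp

private lemma lintegral_sq_le_mul {μ : Measure ℝ} {f g : ℝ → ℝ≥0∞}
    (hf : AEMeasurable f μ) (hg : AEMeasurable g μ) :
    (∫⁻ x, f x * g x ∂μ) ^ 2 ≤ (∫⁻ x, f x ^ 2 ∂μ) * ∫⁻ x, g x ^ 2 ∂μ := by
  have hpq : Real.HolderConjugate 2 2 := Real.HolderConjugate.two_two
  have h := ENNReal.lintegral_mul_le_Lp_mul_Lq μ hpq hf hg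
  simp only [Pi.mul_apply] at h
  have e : ∀ X : ℝ≥0∞, (X ^ ((1:ℝ)/2)) ^ (2:ℕ) = X := by
    intro X
    rw [← ENNReal.rpow_natCast (X ^ ((1:ℝ)/2)) 2, ← ENNReal.rpow_mul]
    norm_num
  have e2 : ∀ h : ℝ → ℝ≥0∞, (∫⁻ x, h x ^ (2:ℝ) ∂μ) = ∫⁻ x, h x ^ (2:ℕ) ∂μ := by
    intro h
    congr 1
    funext x
    rw [← ENNReal.rpow_natCast]
    norm_num
  calc (∫⁻ x, f x * g x ∂μ) ^ 2
      ≤ ((∫⁻ x, f x ^ (2:ℝ) ∂μ) ^ ((1:ℝ)/2) * (∫⁻ x, g x ^ (2:ℝ) ∂μ) ^ ((1:ℝ)/2)) ^ 2 :=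
        pow_le_pow_left₀ (zero_le) h 2
    _ = (∫⁻ x, f x ^ 2 ∂μ) * ∫⁻ x, g x ^ 2 ∂μ := by
        rw [mul_pow, e, e, e2 f, e2 g]

private lemma ofReal_sq_le (t : ℝ) : (ENNReal.ofReal t) ^ 2 ≤ ENNReal.ofReal (t ^ 2) := by
  rcases le_or_gt 0 t with h | h
  · rw [ENNReal.ofReal_pow h]
  · simp [ENNReal.ofReal_of_nonpos h.le]

/-- Hardy-type inequality: for `r ∈ {0,1}`, `α > r` and a nonnegative measurable `φ` with
`∫₀¹ x^{3−2r} φ(x)² dx < ∞`, one has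
`∫₀¹ x^{2α−2r−1} (∫ₓ¹ y^{1−α} φ(y) dy)² dx ≤ (α−r)^{−2} ∫₀¹ x^{3−2r} φ(x)² dx`. -/
theorem hardy_inequality (α r : ℝ) (hr : r = 0 ∨ r = 1) (hαr : r < α)
    (φ : ℝ → ℝ) (hmeas : Measurable φ) (hpos : ∀ x ∈ Ioo (0:ℝ) 1, 0 ≤ φ x)
    (hfin : ∫⁻ x in Ioo (0:ℝ) 1, ENNReal.ofReal (x ^ (3 - 2*r) * φ x ^ 2) < ⊤) :
    ∫⁻ x in Ioo (0:ℝ) 1,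
        ENNReal.ofReal (x ^ (2*α - 2*r - 1)) *
          (∫⁻ y in Ioo x (1:ℝ), ENNReal.ofReal (y ^ (1 - α) * φ y)) ^ 2
      ≤ ENNReal.ofReal (((α - r) ^ 2)⁻¹) *
          ∫⁻ x in Ioo (0:ℝ) 1, ENNReal.ofReal (x ^ (3 - 2*r) * φ x ^ 2) := by
  clear hr hfin hpos
  set β : ℝ := α - r with hβdef
  have hβ : 0 < β := sub_pos.mpr hαr
  set g2 : ℝ → ℝ≥0∞ := fun y => ENNReal.ofReal (y ^ (3 - 2*α + β) * φ y ^ 2) with hg2def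
  have hg2meas : Measurable g2 :=
    ((measurable_rpow_const' _).mul (hmeas.pow_const 2)).ennreal_ofReal
  set J : ℝ → ℝ≥0∞ := fun x => ∫⁻ y in Ioo x 1, g2 y with hJdef
  -- Step 1 : Cauchy-Schwarz
  have key1 : ∀ x ∈ Ioo (0:ℝ) 1,
      (∫⁻ y in Ioo x (1:ℝ), ENNReal.ofReal (y ^ (1 - α) * φ y)) ^ 2
        ≤ (∫⁻ y in Ioo x 1, ENNReal.ofReal (y ^ (-1 - β))) * J x := by
    intro x hx
    set a : ℝ := -(1 + β)/2 with hadef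
    have hfm : AEMeasurable (fun y : ℝ => ENNReal.ofReal (y ^ a))
        (volume.restrict (Ioo x 1)) := ((measurable_rpow_const' a).ennreal_ofReal).aemeasurable
    have hgm : AEMeasurable (fun y : ℝ => ENNReal.ofReal (y ^ (1 - α - a) * φ y))
        (volume.restrict (Ioo x 1)) :=
      (((measurable_rpow_const' _).mul hmeas).ennreal_ofReal).aemeasurable
    have hcs := lintegral_sq_le_mul hfm hgm
    have hEq : (∫⁻ y in Ioo x (1:ℝ), ENNReal.ofReal (y ^ (1 - α) * φ y))
        = ∫⁻ y in Ioo x 1, ENNReal.ofReal (y ^ a) * ENNReal.ofReal (y ^ (1 - α - a) * φ y) := by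
      refine setLIntegral_congr_fun_ae measurableSet_Ioo (ae_of_all _ ?_)
      intro y hy
      have hy0 : 0 < y := lt_trans hx.1 hy.1
      rw [← ENNReal.ofReal_mul (Real.rpow_nonneg hy0.le _), ← mul_assoc,
        ← Real.rpow_add hy0, show a + (1 - α - a) = 1 - α by ring]
    have hf2 : (∫⁻ y in Ioo x 1, (ENNReal.ofReal (y ^ a)) ^ 2)
        = ∫⁻ y in Ioo x 1, ENNReal.ofReal (y ^ (-1 - β)) := by
      refine setLIntegral_congr_fun_ae measurableSet_Ioo (ae_of_all _ ?_)
      intro y hy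
      have hy0 : 0 < y := lt_trans hx.1 hy.1
      rw [pow_two, ← ENNReal.ofReal_mul (Real.rpow_nonneg hy0.le _),
        ← Real.rpow_add hy0, show a + a = -1 - β by rw [hadef]; ring]
    have hg2le : (∫⁻ y in Ioo x 1, (ENNReal.ofReal (y ^ (1 - α - a) * φ y)) ^ 2) ≤ J x := by
      refine lintegral_mono_ae ?_
      filter_upwards [ae_restrict_mem measurableSet_Ioo] with y hy
      have hy0 : 0 < y := lt_trans hx.1 hy.1
      refine le_trans (ofReal_sq_le _) (le_of_eq ?_)
      rw [mul_pow, ← Real.rpow_natCast (y ^ (1 - α - a)) 2, ← Real.rpow_mul hy0.le,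
        show (1 - α - a) * ((2:ℕ):ℝ) = 3 - 2*α + β by push_cast; rw [hadef]; ring]
    calc (∫⁻ y in Ioo x (1:ℝ), ENNReal.ofReal (y ^ (1 - α) * φ y)) ^ 2
        = (∫⁻ y in Ioo x 1,
            ENNReal.ofReal (y ^ a) * ENNReal.ofReal (y ^ (1 - α - a) * φ y)) ^ 2 := by rw [hEq]
      _ ≤ (∫⁻ y in Ioo x 1, (ENNReal.ofReal (y ^ a)) ^ 2) *
            ∫⁻ y in Ioo x 1, (ENNReal.ofReal (y ^ (1 - α - a) * φ y)) ^ 2 := hcs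
      _ ≤ (∫⁻ y in Ioo x 1, ENNReal.ofReal (y ^ (-1 - β))) * J x := by
          rw [hf2]; exact mul_le_mul_right hg2le _
  -- Step 2 : bound on the inner weight integral
  have hB : ∀ x ∈ Ioo (0:ℝ) 1,
      (∫⁻ y in Ioo x 1, ENNReal.ofReal (y ^ (-1 - β))) ≤ ENNReal.ofReal (β⁻¹ * x ^ (-β)) := by
    intro x hx
    have h0 : (0:ℝ) ∉ Set.uIcc x (1:ℝ) := by
      rw [Set.uIcc_of_le hx.2.le, Set.mem_Icc]
      push_neg
      intro h
      linarith [hx.1]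
    have hint : IntegrableOn (fun y : ℝ => y ^ (-1 - β)) (Ioo x 1) := by
      have h1 : IntervalIntegrable (fun y : ℝ => y ^ (-1 - β)) volume x 1 :=
        intervalIntegral.intervalIntegrable_rpow (Or.inr h0)
      exact ((intervalIntegrable_iff_integrableOn_Ioc_of_le hx.2.le).mp h1).mono_set
        Ioo_subset_Ioc_self
    have hnn : 0 ≤ᵐ[volume.restrict (Ioo x 1)] fun y : ℝ => y ^ (-1 - β) := by
      filter_upwards [ae_restrict_mem measurableSet_Ioo] with y hy
      exact Real.rpow_nonneg (le_of_lt (lt_trans hx.1 hy.1)) _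
    rw [← MeasureTheory.ofReal_integral_eq_lintegral_ofReal hint hnn]
    apply ENNReal.ofReal_le_ofReal
    have heq : (∫ y in Ioo x 1, y ^ (-1 - β)) = ∫ y in x..1, y ^ (-1 - β) := by
      rw [intervalIntegral.integral_of_le hx.2.le, integral_Ioc_eq_integral_Ioo]
    rw [heq, integral_rpow (Or.inr ⟨by intro h; apply hβ.ne'; linarith, h0⟩),
      show (-1 - β + 1 : ℝ) = -β by ring, Real.one_rpow]
    have hx0 : (0:ℝ) ≤ x ^ (-β) := Real.rpow_nonneg hx.1.le _
    rw [div_eq_mul_inv]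
    have h1 : (1 - x ^ (-β)) * (-β)⁻¹ = (x ^ (-β) - 1) * β⁻¹ := by
      rw [inv_neg]; ring
    rw [h1]
    have h2 : (x ^ (-β) - 1) * β⁻¹ ≤ x ^ (-β) * β⁻¹ := by
      apply mul_le_mul_of_nonneg_right (by linarith) (inv_nonneg.mpr hβ.le)
    linarith [h2]
  -- Step 3 : inner integral near 0
  have hE : ∀ y ∈ Ioo (0:ℝ) 1,
      (∫⁻ x in Ioo (0:ℝ) y, ENNReal.ofReal (x ^ (β - 1))) ≤ ENNReal.ofReal (β⁻¹ * y ^ β) := by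
    intro y hy
    have hint : IntegrableOn (fun x : ℝ => x ^ (β - 1)) (Ioo 0 y) :=
      (intervalIntegral.integrableOn_Ioo_rpow_iff hy.1).mpr (by linarith)
    have hnn : 0 ≤ᵐ[volume.restrict (Ioo (0:ℝ) y)] fun x : ℝ => x ^ (β - 1) := by
      filter_upwards [ae_restrict_mem measurableSet_Ioo] with x hx
      exact Real.rpow_nonneg hx.1.le _
    rw [← MeasureTheory.ofReal_integral_eq_lintegral_ofReal hint hnn]
    apply ENNReal.ofReal_le_ofReal
    have heq : (∫ x in Ioo (0:ℝ) y, x ^ (β - 1)) = ∫ x in (0:ℝ)..y, x ^ (β - 1) := by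
      rw [intervalIntegral.integral_of_le hy.1.le, integral_Ioc_eq_integral_Ioo]
    rw [heq, integral_rpow (Or.inl (by linarith)),
      show (β - 1 + 1 : ℝ) = β by ring, Real.zero_rpow hβ.ne']
    rw [div_eq_mul_inv, mul_comm]
    simp
  -- Tonelli setup
  set F : ℝ × ℝ → ℝ≥0∞ :=
    {p : ℝ × ℝ | p.1 < p.2}.indicator
      (fun p => ENNReal.ofReal (p.1 ^ (β - 1)) * g2 p.2) with hFdef
  have hFmeas : Measurable F := by
    refine Measurable.indicator ?_ (measurableSet_lt measurable_fst measurable_snd)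
    exact (((measurable_rpow_const' (β - 1)).comp measurable_fst).ennreal_ofReal).mul
      (hg2meas.comp measurable_snd)
  -- key identity on the x side
  have hxside : ∀ x ∈ Ioo (0:ℝ) 1,
      ENNReal.ofReal (x ^ (β - 1)) * J x = ∫⁻ y in Ioo (0:ℝ) 1, F (x, y) := by
    intro x hx
    have h1 : ENNReal.ofReal (x ^ (β - 1)) * J x
        = ∫⁻ y in Ioo x 1, ENNReal.ofReal (x ^ (β - 1)) * g2 y := by
      rw [hJdef, lintegral_const_mul' _ _ ENNReal.ofReal_ne_top]
    have h2 : (fun y : ℝ => F (x, y))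
        = (Ioi x).indicator fun y => ENNReal.ofReal (x ^ (β - 1)) * g2 y := by
      funext y
      simp only [hFdef, Set.indicator_apply, Set.mem_setOf_eq, Set.mem_Ioi]
    have h3 : Ioi x ∩ Ioo (0:ℝ) 1 = Ioo x 1 := by
      ext y
      simp only [Set.mem_inter_iff, Set.mem_Ioi, Set.mem_Ioo]
      constructor
      · rintro ⟨h, _, h2⟩; exact ⟨h, h2⟩
      · rintro ⟨h, h2⟩; exact ⟨h, lt_trans hx.1 h, h2⟩
    rw [h1]
    rw [show (∫⁻ y in Ioo (0:ℝ) 1, F (x, y)) =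
      ∫⁻ y in Ioo (0:ℝ) 1, (Ioi x).indicator (fun y => ENNReal.ofReal (x ^ (β - 1)) * g2 y) y
      from by rw [h2]]
    rw [lintegral_indicator measurableSet_Ioi, Measure.restrict_restrict measurableSet_Ioi, h3]
  -- key identity/estimate on the y side
  have hyside : ∀ y ∈ Ioo (0:ℝ) 1,
      (∫⁻ x in Ioo (0:ℝ) 1, F (x, y))
        ≤ ENNReal.ofReal β⁻¹ * ENNReal.ofReal (y ^ (3 - 2*r) * φ y ^ 2) := by
    intro y hy
    have h2 : (fun x : ℝ => F (x, y))
        = (Iio y).indicator fun x => ENNReal.ofReal (x ^ (β - 1)) * g2 y := by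
      funext x
      simp only [hFdef, Set.indicator_apply, Set.mem_setOf_eq, Set.mem_Iio]
    have h3 : Iio y ∩ Ioo (0:ℝ) 1 = Ioo 0 y := by
      ext x
      simp only [Set.mem_inter_iff, Set.mem_Iio, Set.mem_Ioo]
      constructor
      · rintro ⟨h, h1, _⟩; exact ⟨h1, h⟩
      · rintro ⟨h1, h⟩; exact ⟨h, h1, lt_trans h hy.2⟩
    have h4 : (∫⁻ x in Ioo (0:ℝ) 1, F (x, y))
        = (∫⁻ x in Ioo (0:ℝ) y, ENNReal.ofReal (x ^ (β - 1))) * g2 y := by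
      rw [show (∫⁻ x in Ioo (0:ℝ) 1, F (x, y)) =
        ∫⁻ x in Ioo (0:ℝ) 1, (Iio y).indicator (fun x => ENNReal.ofReal (x ^ (β - 1)) * g2 y) x
        from by rw [h2]]
      rw [lintegral_indicator measurableSet_Iio, Measure.restrict_restrict measurableSet_Iio, h3,
        lintegral_mul_const' _ _ ENNReal.ofReal_ne_top]
    rw [h4]
    calc (∫⁻ x in Ioo (0:ℝ) y, ENNReal.ofReal (x ^ (β - 1))) * g2 y
        ≤ ENNReal.ofReal (β⁻¹ * y ^ β) * g2 y := mul_le_mul_left (hE y hy) _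
      _ = ENNReal.ofReal β⁻¹ * ENNReal.ofReal (y ^ (3 - 2*r) * φ y ^ 2) := by
          rw [hg2def, ENNReal.ofReal_mul (inv_nonneg.mpr hβ.le), mul_assoc,
            ← ENNReal.ofReal_mul (Real.rpow_nonneg hy.1.le _), ← mul_assoc,
            ← Real.rpow_add hy.1, show β + (3 - 2*α + β) = 3 - 2*r by rw [hβdef]; ring]
  -- main computation
  calc ∫⁻ x in Ioo (0:ℝ) 1,
        ENNReal.ofReal (x ^ (2*α - 2*r - 1)) *
          (∫⁻ y in Ioo x (1:ℝ), ENNReal.ofReal (y ^ (1 - α) * φ y)) ^ 2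
      ≤ ∫⁻ x in Ioo (0:ℝ) 1, ENNReal.ofReal β⁻¹ * (ENNReal.ofReal (x ^ (β - 1)) * J x) := by
        refine lintegral_mono_ae ?_
        filter_upwards [ae_restrict_mem measurableSet_Ioo] with x hx
        have hb : (∫⁻ y in Ioo x (1:ℝ), ENNReal.ofReal (y ^ (1 - α) * φ y)) ^ 2
            ≤ ENNReal.ofReal (β⁻¹ * x ^ (-β)) * J x :=
          le_trans (key1 x hx) (mul_le_mul_left (hB x hx) _)
        calc ENNReal.ofReal (x ^ (2*α - 2*r - 1)) *
              (∫⁻ y in Ioo x (1:ℝ), ENNReal.ofReal (y ^ (1 - α) * φ y)) ^ 2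
            ≤ ENNReal.ofReal (x ^ (2*α - 2*r - 1)) *
                (ENNReal.ofReal (β⁻¹ * x ^ (-β)) * J x) := mul_le_mul_right hb _
          _ = ENNReal.ofReal β⁻¹ * (ENNReal.ofReal (x ^ (β - 1)) * J x) := by
              rw [ENNReal.ofReal_mul (inv_nonneg.mpr hβ.le)]
              have : ENNReal.ofReal (x ^ (2*α - 2*r - 1)) * ENNReal.ofReal (x ^ (-β))
                  = ENNReal.ofReal (x ^ (β - 1)) := by
                rw [← ENNReal.ofReal_mul (Real.rpow_nonneg hx.1.le _), ← Real.rpow_add hx.1,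
                  show 2*α - 2*r - 1 + -β = β - 1 by rw [hβdef]; ring]
              calc ENNReal.ofReal (x ^ (2*α - 2*r - 1)) *
                    (ENNReal.ofReal β⁻¹ * ENNReal.ofReal (x ^ (-β)) * J x)
                  = ENNReal.ofReal β⁻¹ *
                      (ENNReal.ofReal (x ^ (2*α - 2*r - 1)) * ENNReal.ofReal (x ^ (-β)) * J x) :=
                    by ring
                _ = ENNReal.ofReal β⁻¹ * (ENNReal.ofReal (x ^ (β - 1)) * J x) := by rw [this]
    _ = ENNReal.ofReal β⁻¹ *
          ∫⁻ x in Ioo (0:ℝ) 1, ENNReal.ofReal (x ^ (β - 1)) * J x := by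
        rw [lintegral_const_mul' _ _ ENNReal.ofReal_ne_top]
    _ = ENNReal.ofReal β⁻¹ *
          ∫⁻ x in Ioo (0:ℝ) 1, ∫⁻ y in Ioo (0:ℝ) 1, F (x, y) := by
        congr 1
        refine setLIntegral_congr_fun_ae measurableSet_Ioo (ae_of_all _ ?_)
        intro x hx
        exact hxside x hx
    _ = ENNReal.ofReal β⁻¹ *
          ∫⁻ y in Ioo (0:ℝ) 1, ∫⁻ x in Ioo (0:ℝ) 1, F (x, y) := by
        congr 1
        exact lintegral_lintegral_swap (hFmeas.aemeasurable)
    _ ≤ ENNReal.ofReal β⁻¹ *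
          ∫⁻ y in Ioo (0:ℝ) 1,
            ENNReal.ofReal β⁻¹ * ENNReal.ofReal (y ^ (3 - 2*r) * φ y ^ 2) := by
        refine mul_le_mul_right ?_ _
        refine lintegral_mono_ae ?_
        filter_upwards [ae_restrict_mem measurableSet_Ioo] with y hy
        exact hyside y hy
    _ = ENNReal.ofReal (((α - r) ^ 2)⁻¹) *
          ∫⁻ x in Ioo (0:ℝ) 1, ENNReal.ofReal (x ^ (3 - 2*r) * φ x ^ 2) := by
        rw [lintegral_const_mul' _ _ ENNReal.ofReal_ne_top, ← mul_assoc,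
          ← ENNReal.ofReal_mul (inv_nonneg.mpr hβ.le),
          show β⁻¹ * β⁻¹ = ((α - r) ^ 2)⁻¹ by rw [hβdef]; rw [pow_two, mul_inv]]
end

section
/- Let α > 1. Then there is a constant C, depending only on α, such that for every φ ∈ L²_x one has ‖x^{−1} A_α φ‖_{L²_x} ≤ C ‖φ‖_{L²_x} and ‖x^{−1} A_α^* φ‖_{L²_x} ≤ C ‖φ‖_{L²_x}; that is, the operators (1/x)A_α and (1/x)A_α^* are bounded from L²_x to L²_x. -/
open MeasureTheory Set
open scoped ENNReal

/-- The integral operator `(A_α φ)(x) = x^{−α} ∫₀ˣ y^α φ(y) dy`. -/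
noncomputable def Aa (α : ℝ) (φ : ℝ → ℝ) : ℝ → ℝ :=
  fun x => x ^ (-α) * ∫ y in Ioo (0:ℝ) x, y ^ α * φ y

/-- The integral operator `(A_α^* φ)(x) = x^{α−1} ∫ₓ¹ y^{1−α} φ(y) dy`. -/
noncomputable def Astar (α : ℝ) (φ : ℝ → ℝ) : ℝ → ℝ :=
  fun x => x ^ (α - 1) * ∫ y in Ioo x (1:ℝ), y ^ (1 - α) * φ y

/-- The twisted derivative `D_{x,α} φ = φ' + (α/x) φ`. -/
noncomputable def Dtw (α : ℝ) (φ : ℝ → ℝ) : ℝ → ℝ :=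
  fun x => deriv φ x + (α / x) * φ x

/-- The formal adjoint `D*_{x,α} φ = −φ' + ((α−1)/x) φ`. -/
noncomputable def Dstar (α : ℝ) (φ : ℝ → ℝ) : ℝ → ℝ :=
  fun x => -deriv φ x + ((α - 1) / x) * φ x

/-- Membership in `L²_x = L²((0,1), x dx)`. -/
def MemL2x (φ : ℝ → ℝ) : Prop := IntegrableOn (fun x => φ x ^ 2 * x) (Ioo (0:ℝ) 1)

/-- The `L²_x` norm, `‖φ‖ = (∫₀¹ φ(x)² x dx)^{1/2}`. -/
noncomputable def L2xNorm (φ : ℝ → ℝ) : ℝ := Real.sqrt (∫ x in Ioo (0:ℝ) 1, φ x ^ 2 * x)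

/-- The `L²_x` norm as an extended nonnegative real, `(∫₀¹ φ(x)² x dx)^{1/2}`. -/
noncomputable def eL2x (φ : ℝ → ℝ) : ℝ≥0∞ :=
  (∫⁻ x in Ioo (0:ℝ) 1, ENNReal.ofReal (φ x ^ 2 * x)) ^ (1/2 : ℝ)

-- exact lintegral of y^p over Ioo 0 a, for p > -1, 0 ≤ a
lemma lint_rpow_Ioo (p : ℝ) (hp : -1 < p) (a : ℝ) (ha : 0 ≤ a) :
    ∫⁻ y in Ioo (0:ℝ) a, ENNReal.ofReal (y ^ p) = ENNReal.ofReal (a ^ (p+1) / (p+1)) := by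
  have hint : IntervalIntegrable (fun y : ℝ => y ^ p) volume 0 a :=
    intervalIntegral.intervalIntegrable_rpow' hp
  have hii : IntegrableOn (fun y : ℝ => y ^ p) (Ioo 0 a) := by
    have := (intervalIntegrable_iff_integrableOn_Ioo_of_le ha).mp hint
    exact this
  have hnn : 0 ≤ᵐ[volume.restrict (Ioo (0:ℝ) a)] fun y => y ^ p := by
    filter_upwards [ae_restrict_mem measurableSet_Ioo] with y hy
    exact Real.rpow_nonneg hy.1.le _
  rw [← ofReal_integral_eq_lintegral_ofReal hii hnn]
  congr 1
  open intervalIntegral in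
  rw [← integral_Ioc_eq_integral_Ioo, ← intervalIntegral.integral_of_le ha,
    integral_rpow (Or.inl hp), Real.zero_rpow (by linarith)]
  ring

-- upper bound for lintegral of x^q over Ioo a 1, q < -1, 0 < a
lemma lint_rpow_Ioo_upper (q : ℝ) (hq : q < -1) (a : ℝ) (ha : 0 < a) (ha1 : a ≤ 1) :
    ∫⁻ x in Ioo a 1, ENNReal.ofReal (x ^ q) ≤ ENNReal.ofReal (a ^ (q+1) / (-(q+1))) := by
  have hint : IntervalIntegrable (fun x : ℝ => x ^ q) volume a 1 := by
    apply intervalIntegral.intervalIntegrable_rpow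
    right
    rw [uIcc_of_le ha1]
    intro h; exact absurd h.1 (not_le.mpr ha)
  have hii : IntegrableOn (fun x : ℝ => x ^ q) (Ioo a 1) :=
    (intervalIntegrable_iff_integrableOn_Ioo_of_le ha1).mp hint
  have hnn : 0 ≤ᵐ[volume.restrict (Ioo a (1:ℝ))] fun x => x ^ q := by
    filter_upwards [ae_restrict_mem measurableSet_Ioo] with x hx
    exact Real.rpow_nonneg (le_trans ha.le hx.1.le) _
  rw [← ofReal_integral_eq_lintegral_ofReal hii hnn]
  apply ENNReal.ofReal_le_ofReal
  have : ∫ x in Ioo a 1, x ^ q = (1 ^ (q+1) - a ^ (q+1)) / (q+1) := by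
    open intervalIntegral in
    rw [← integral_Ioc_eq_integral_Ioo, ← intervalIntegral.integral_of_le ha1,
      integral_rpow]
    right
    constructor
    · linarith
    · rw [uIcc_of_le ha1]; intro h; exact absurd h.1 (not_le.mpr ha)
  rw [this, Real.one_rpow]
  have h2 : (1 - a ^ (q+1)) / (q+1) = (a ^ (q+1) - 1) / (-(q+1)) := by
    rw [div_eq_div_iff (by linarith) (by linarith)]; ring
  rw [h2]
  gcongr
  · linarith
  · linarith

lemma lint_CS (μ : Measure ℝ) {f g : ℝ → ℝ≥0∞} (hf : AEMeasurable f μ) (hg : AEMeasurable g μ) :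
    (∫⁻ y, f y * g y ∂μ) ^ 2 ≤ (∫⁻ y, f y ^ 2 ∂μ) * (∫⁻ y, g y ^ 2 ∂μ) := by
  have hpq : Real.HolderConjugate 2 2 := ⟨by norm_num, by norm_num, by norm_num⟩
  have h := ENNReal.lintegral_mul_le_Lp_mul_Lq μ hpq hf hg
  calc (∫⁻ y, f y * g y ∂μ) ^ 2
      ≤ ((∫⁻ y, f y ^ (2:ℝ) ∂μ) ^ (1/2:ℝ) * (∫⁻ y, g y ^ (2:ℝ) ∂μ) ^ (1/2:ℝ)) ^ 2 := by
        exact pow_le_pow_left' h 2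
    _ = (∫⁻ y, f y ^ 2 ∂μ) * (∫⁻ y, g y ^ 2 ∂μ) := by
        rw [mul_pow, ← ENNReal.rpow_natCast (_ ^ (1/2:ℝ)) 2, ← ENNReal.rpow_natCast (_ ^ (1/2:ℝ)) 2,
          ← ENNReal.rpow_mul, ← ENNReal.rpow_mul]
        norm_num

lemma key1 (α : ℝ) (hα : 1 < α) (G : ℝ → ℝ≥0∞) (hG : Measurable G) :
    ∫⁻ x in Ioo (0:ℝ) 1, ENNReal.ofReal (x ^ (-2*α-1)) *
        (∫⁻ y in Ioo (0:ℝ) x, ENNReal.ofReal (y ^ α) * G y) ^ 2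
      ≤ ENNReal.ofReal (α⁻¹) ^ 2 * ∫⁻ y in Ioo (0:ℝ) 1, G y ^ 2 * ENNReal.ofReal y := by
  have hα0 : 0 < α := by linarith
  set J : ℝ → ℝ≥0∞ := fun x => ∫⁻ y in Ioo (0:ℝ) x, ENNReal.ofReal (y ^ (α+1)) * G y ^ 2 with hJ
  -- Step A : pointwise Cauchy-Schwarz
  have stepA : ∀ x ∈ Ioo (0:ℝ) 1,
      (∫⁻ y in Ioo (0:ℝ) x, ENNReal.ofReal (y ^ α) * G y) ^ 2
        ≤ ENNReal.ofReal (x ^ α / α) * J x := by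
    intro x hx
    have h1 : (∫⁻ y in Ioo (0:ℝ) x, ENNReal.ofReal (y ^ α) * G y)
        = ∫⁻ y in Ioo (0:ℝ) x,
            ENNReal.ofReal (y ^ ((α-1)/2)) * (ENNReal.ofReal (y ^ ((α+1)/2)) * G y) := by
      apply lintegral_congr_ae
      filter_upwards [ae_restrict_mem measurableSet_Ioo] with y hy
      rw [← mul_assoc, ← ENNReal.ofReal_mul (Real.rpow_nonneg hy.1.le _),
        ← Real.rpow_add hy.1, show (α-1)/2 + (α+1)/2 = α by ring]
    rw [h1]
    have hf : AEMeasurable (fun y : ℝ => ENNReal.ofReal (y ^ ((α-1)/2)))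
        (volume.restrict (Ioo (0:ℝ) x)) :=
      (ENNReal.measurable_ofReal.comp (measurable_id.pow measurable_const)).aemeasurable
    have hg : AEMeasurable (fun y : ℝ => ENNReal.ofReal (y ^ ((α+1)/2)) * G y)
        (volume.restrict (Ioo (0:ℝ) x)) :=
      ((ENNReal.measurable_ofReal.comp (measurable_id.pow measurable_const)).mul hG).aemeasurable
    refine le_trans (lint_CS _ hf hg) ?_
    have e1 : (∫⁻ y in Ioo (0:ℝ) x, ENNReal.ofReal (y ^ ((α-1)/2)) ^ 2)
        = ENNReal.ofReal (x ^ α / α) := by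
      have : (∫⁻ y in Ioo (0:ℝ) x, ENNReal.ofReal (y ^ ((α-1)/2)) ^ 2)
          = ∫⁻ y in Ioo (0:ℝ) x, ENNReal.ofReal (y ^ (α-1)) := by
        apply lintegral_congr_ae
        filter_upwards [ae_restrict_mem measurableSet_Ioo] with y hy
        rw [← ENNReal.ofReal_pow (Real.rpow_nonneg hy.1.le _),
          ← Real.rpow_natCast (y ^ ((α-1)/2)) 2, ← Real.rpow_mul hy.1.le]
        norm_num
      rw [this, lint_rpow_Ioo (α-1) (by linarith) x hx.1.le]
      norm_num
    have e2 : (∫⁻ y in Ioo (0:ℝ) x, (ENNReal.ofReal (y ^ ((α+1)/2)) * G y) ^ 2) = J x := by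
      apply lintegral_congr_ae
      filter_upwards [ae_restrict_mem measurableSet_Ioo] with y hy
      rw [mul_pow, ← ENNReal.ofReal_pow (Real.rpow_nonneg hy.1.le _),
        ← Real.rpow_natCast (y ^ ((α+1)/2)) 2, ← Real.rpow_mul hy.1.le]
      norm_num
    rw [e1, e2]
  -- Step B : plug in
  have stepB : ∫⁻ x in Ioo (0:ℝ) 1, ENNReal.ofReal (x ^ (-2*α-1)) *
        (∫⁻ y in Ioo (0:ℝ) x, ENNReal.ofReal (y ^ α) * G y) ^ 2
      ≤ ENNReal.ofReal (α⁻¹) * ∫⁻ x in Ioo (0:ℝ) 1, ENNReal.ofReal (x ^ (-α-1)) * J x := by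
    rw [← lintegral_const_mul' _ _ ENNReal.ofReal_ne_top]
    apply lintegral_mono_ae
    filter_upwards [ae_restrict_mem measurableSet_Ioo] with x hx
    calc ENNReal.ofReal (x ^ (-2*α-1)) *
          (∫⁻ y in Ioo (0:ℝ) x, ENNReal.ofReal (y ^ α) * G y) ^ 2
        ≤ ENNReal.ofReal (x ^ (-2*α-1)) * (ENNReal.ofReal (x ^ α / α) * J x) :=
          mul_le_mul_right (stepA x hx) _
      _ = ENNReal.ofReal α⁻¹ * (ENNReal.ofReal (x ^ (-α-1)) * J x) := by
          rw [← mul_assoc, ← mul_assoc, ← ENNReal.ofReal_mul (Real.rpow_nonneg hx.1.le _),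
            ← ENNReal.ofReal_mul (by positivity)]
          congr 2
          rw [div_eq_mul_inv, ← mul_assoc, ← Real.rpow_add hx.1]
          ring_nf
  refine le_trans stepB ?_
  -- Step C : Tonelli
  have hH : Measurable fun y : ℝ => ENNReal.ofReal (y ^ (α+1)) * G y ^ 2 :=
    (ENNReal.measurable_ofReal.comp (measurable_id.pow measurable_const)).mul (hG.pow_const 2)
  have stepC : ∫⁻ x in Ioo (0:ℝ) 1, ENNReal.ofReal (x ^ (-α-1)) * J x
      ≤ ENNReal.ofReal (α⁻¹) * ∫⁻ y in Ioo (0:ℝ) 1, G y ^ 2 * ENNReal.ofReal y := by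
    set F : ℝ → ℝ → ℝ≥0∞ := fun x y =>
      (Ioo (0:ℝ) x).indicator
        (fun y => ENNReal.ofReal (x ^ (-α-1)) * (ENNReal.ofReal (y ^ (α+1)) * G y ^ 2)) y
      with hF
    have hFmeas : AEMeasurable (Function.uncurry F)
        ((volume.restrict (Ioo (0:ℝ) 1)).prod (volume.restrict (Ioo (0:ℝ) 1))) := by
      have : Function.uncurry F = fun p : ℝ × ℝ =>
          Set.indicator {p : ℝ × ℝ | 0 < p.2 ∧ p.2 < p.1}
            (fun p => ENNReal.ofReal (p.1 ^ (-α-1)) *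
              (ENNReal.ofReal (p.2 ^ (α+1)) * G p.2 ^ 2)) p := by
        funext p
        simp only [Function.uncurry, hF, Set.indicator, mem_Ioo, mem_setOf_eq]
      rw [this]
      apply Measurable.aemeasurable
      apply Measurable.indicator
      · exact ((ENNReal.measurable_ofReal.comp (measurable_fst.pow measurable_const)).mul
          ((ENNReal.measurable_ofReal.comp (measurable_snd.pow measurable_const)).mul
            ((hG.comp measurable_snd).pow_const 2)))
      · exact MeasurableSet.inter
          (measurableSet_lt measurable_const measurable_snd)
          (measurableSet_lt measurable_snd measurable_fst)
    have eq1 : ∀ x ∈ Ioo (0:ℝ) 1,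
        ENNReal.ofReal (x ^ (-α-1)) * J x = ∫⁻ y in Ioo (0:ℝ) 1, F x y := by
      intro x hx
      rw [hJ]
      simp only [hF]
      rw [lintegral_indicator measurableSet_Ioo,
        Measure.restrict_restrict measurableSet_Ioo]
      have : Ioo (0:ℝ) x ∩ Ioo 0 1 = Ioo 0 x := by
        apply inter_eq_left.mpr
        exact Ioo_subset_Ioo le_rfl hx.2.le
      rw [this, ← lintegral_const_mul' _ _ ENNReal.ofReal_ne_top]
    have swap : ∫⁻ x in Ioo (0:ℝ) 1, ∫⁻ y in Ioo (0:ℝ) 1, F x y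
        = ∫⁻ y in Ioo (0:ℝ) 1, ∫⁻ x in Ioo (0:ℝ) 1, F x y :=
      lintegral_lintegral_swap hFmeas
    calc ∫⁻ x in Ioo (0:ℝ) 1, ENNReal.ofReal (x ^ (-α-1)) * J x
        = ∫⁻ x in Ioo (0:ℝ) 1, ∫⁻ y in Ioo (0:ℝ) 1, F x y := by
          apply lintegral_congr_ae
          filter_upwards [ae_restrict_mem measurableSet_Ioo] with x hx
          exact eq1 x hx
      _ = ∫⁻ y in Ioo (0:ℝ) 1, ∫⁻ x in Ioo (0:ℝ) 1, F x y := swap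
      _ ≤ ∫⁻ y in Ioo (0:ℝ) 1, ENNReal.ofReal (α⁻¹) * (G y ^ 2 * ENNReal.ofReal y) := by
          apply lintegral_mono_ae
          filter_upwards [ae_restrict_mem measurableSet_Ioo] with y hy
          have inner_eq : ∫⁻ x in Ioo (0:ℝ) 1, F x y
              = (∫⁻ x in Ioo y 1, ENNReal.ofReal (x ^ (-α-1))) *
                  (ENNReal.ofReal (y ^ (α+1)) * G y ^ 2) := by
            have hFy : ∀ x : ℝ, F x y = (Ioi y).indicator
                (fun x => ENNReal.ofReal (x ^ (-α-1)) *
                  (ENNReal.ofReal (y ^ (α+1)) * G y ^ 2)) x := by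
              intro x
              simp only [hF, Set.indicator, mem_Ioo, mem_Ioi]
              by_cases h : y < x
              · simp [h, hy.1]
              · simp [h]
            simp_rw [hFy]
            rw [lintegral_indicator measurableSet_Ioi,
              Measure.restrict_restrict measurableSet_Ioi]
            have : Ioi y ∩ Ioo 0 1 = Ioo y 1 := by
              ext t; simp only [mem_inter_iff, mem_Ioi, mem_Ioo]
              constructor
              · rintro ⟨h1, _, h3⟩; exact ⟨h1, h3⟩
              · rintro ⟨h1, h3⟩; exact ⟨h1, lt_trans hy.1 h1, h3⟩
            rw [this, lintegral_mul_const]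
            exact ENNReal.measurable_ofReal.comp (measurable_id.pow measurable_const)
          rw [inner_eq]
          have hb := lint_rpow_Ioo_upper (-α-1) (by linarith) y hy.1 hy.2.le
          calc (∫⁻ x in Ioo y 1, ENNReal.ofReal (x ^ (-α-1))) *
                (ENNReal.ofReal (y ^ (α+1)) * G y ^ 2)
              ≤ ENNReal.ofReal (y ^ (-α-1+1) / (-(-α-1+1))) *
                (ENNReal.ofReal (y ^ (α+1)) * G y ^ 2) := mul_le_mul_left hb _
            _ = ENNReal.ofReal (α⁻¹) * (G y ^ 2 * ENNReal.ofReal y) := by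
                rw [← mul_assoc, ← ENNReal.ofReal_mul
                  (div_nonneg (Real.rpow_nonneg hy.1.le _) (by linarith))]
                have : y ^ (-α-1+1) / (-(-α-1+1)) * y ^ (α+1) = α⁻¹ * y := by
                  rw [div_mul_eq_mul_div, ← Real.rpow_add hy.1,
                    show -α-1+1 + (α+1) = 1 by ring, Real.rpow_one,
                    show -(-α-1+1) = α by ring, div_eq_mul_inv]
                  ring
                rw [this, ENNReal.ofReal_mul (by positivity)]
                ring
      _ = ENNReal.ofReal (α⁻¹) * ∫⁻ y in Ioo (0:ℝ) 1, G y ^ 2 * ENNReal.ofReal y := by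
          rw [← lintegral_const_mul' _ _ ENNReal.ofReal_ne_top]
  calc ENNReal.ofReal α⁻¹ * ∫⁻ x in Ioo (0:ℝ) 1, ENNReal.ofReal (x ^ (-α-1)) * J x
      ≤ ENNReal.ofReal α⁻¹ *
        (ENNReal.ofReal (α⁻¹) * ∫⁻ y in Ioo (0:ℝ) 1, G y ^ 2 * ENNReal.ofReal y) :=
        mul_le_mul_right stepC _
    _ = ENNReal.ofReal (α⁻¹) ^ 2 * ∫⁻ y in Ioo (0:ℝ) 1, G y ^ 2 * ENNReal.ofReal y := by
        rw [← mul_assoc, sq]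

lemma key2 (α : ℝ) (hα : 1 < α) (G : ℝ → ℝ≥0∞) (hG : Measurable G) :
    ∫⁻ x in Ioo (0:ℝ) 1, ENNReal.ofReal (x ^ (2*α-3)) *
        (∫⁻ y in Ioo x (1:ℝ), ENNReal.ofReal (y ^ (1-α)) * G y) ^ 2
      ≤ ENNReal.ofReal ((α-1)⁻¹) ^ 2 * ∫⁻ y in Ioo (0:ℝ) 1, G y ^ 2 * ENNReal.ofReal y := by
  have hα0 : 0 < α - 1 := by linarith
  set J : ℝ → ℝ≥0∞ := fun x => ∫⁻ y in Ioo x (1:ℝ), ENNReal.ofReal (y ^ (2-α)) * G y ^ 2 with hJ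
  have stepA : ∀ x ∈ Ioo (0:ℝ) 1,
      (∫⁻ y in Ioo x (1:ℝ), ENNReal.ofReal (y ^ (1-α)) * G y) ^ 2
        ≤ ENNReal.ofReal (x ^ (1-α) / (α-1)) * J x := by
    intro x hx
    have h1 : (∫⁻ y in Ioo x (1:ℝ), ENNReal.ofReal (y ^ (1-α)) * G y)
        = ∫⁻ y in Ioo x (1:ℝ),
            ENNReal.ofReal (y ^ (-α/2)) * (ENNReal.ofReal (y ^ ((2-α)/2)) * G y) := by
      apply lintegral_congr_ae
      filter_upwards [ae_restrict_mem measurableSet_Ioo] with y hy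
      have hy0 : 0 < y := lt_trans hx.1 hy.1
      rw [← mul_assoc, ← ENNReal.ofReal_mul (Real.rpow_nonneg hy0.le _),
        ← Real.rpow_add hy0, show -α/2 + (2-α)/2 = 1-α by ring]
    rw [h1]
    have hf : AEMeasurable (fun y : ℝ => ENNReal.ofReal (y ^ (-α/2)))
        (volume.restrict (Ioo x (1:ℝ))) :=
      (ENNReal.measurable_ofReal.comp (measurable_id.pow measurable_const)).aemeasurable
    have hg : AEMeasurable (fun y : ℝ => ENNReal.ofReal (y ^ ((2-α)/2)) * G y)
        (volume.restrict (Ioo x (1:ℝ))) :=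
      ((ENNReal.measurable_ofReal.comp (measurable_id.pow measurable_const)).mul hG).aemeasurable
    refine le_trans (lint_CS _ hf hg) ?_
    have e1 : (∫⁻ y in Ioo x (1:ℝ), ENNReal.ofReal (y ^ (-α/2)) ^ 2)
        ≤ ENNReal.ofReal (x ^ (1-α) / (α-1)) := by
      have : (∫⁻ y in Ioo x (1:ℝ), ENNReal.ofReal (y ^ (-α/2)) ^ 2)
          = ∫⁻ y in Ioo x (1:ℝ), ENNReal.ofReal (y ^ (-α)) := by
        apply lintegral_congr_ae
        filter_upwards [ae_restrict_mem measurableSet_Ioo] with y hy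
        have hy0 : 0 < y := lt_trans hx.1 hy.1
        rw [← ENNReal.ofReal_pow (Real.rpow_nonneg hy0.le _),
          ← Real.rpow_natCast (y ^ (-α/2)) 2, ← Real.rpow_mul hy0.le]
        norm_num
      rw [this]
      have := lint_rpow_Ioo_upper (-α) (by linarith) x hx.1 hx.2.le
      simpa [show -α + 1 = 1 - α by ring, show -(-α+1) = α - 1 by ring] using this
    have e2 : (∫⁻ y in Ioo x (1:ℝ), (ENNReal.ofReal (y ^ ((2-α)/2)) * G y) ^ 2) = J x := by
      apply lintegral_congr_ae
      filter_upwards [ae_restrict_mem measurableSet_Ioo] with y hy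
      have hy0 : 0 < y := lt_trans hx.1 hy.1
      rw [mul_pow, ← ENNReal.ofReal_pow (Real.rpow_nonneg hy0.le _),
        ← Real.rpow_natCast (y ^ ((2-α)/2)) 2, ← Real.rpow_mul hy0.le]
      norm_num
    rw [e2]
    exact mul_le_mul_left e1 _
  have stepB : ∫⁻ x in Ioo (0:ℝ) 1, ENNReal.ofReal (x ^ (2*α-3)) *
        (∫⁻ y in Ioo x (1:ℝ), ENNReal.ofReal (y ^ (1-α)) * G y) ^ 2
      ≤ ENNReal.ofReal ((α-1)⁻¹) * ∫⁻ x in Ioo (0:ℝ) 1, ENNReal.ofReal (x ^ (α-2)) * J x := by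
    rw [← lintegral_const_mul' _ _ ENNReal.ofReal_ne_top]
    apply lintegral_mono_ae
    filter_upwards [ae_restrict_mem measurableSet_Ioo] with x hx
    calc ENNReal.ofReal (x ^ (2*α-3)) *
          (∫⁻ y in Ioo x (1:ℝ), ENNReal.ofReal (y ^ (1-α)) * G y) ^ 2
        ≤ ENNReal.ofReal (x ^ (2*α-3)) * (ENNReal.ofReal (x ^ (1-α) / (α-1)) * J x) :=
          mul_le_mul_right (stepA x hx) _
      _ = ENNReal.ofReal (α-1)⁻¹ * (ENNReal.ofReal (x ^ (α-2)) * J x) := by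
          rw [← mul_assoc, ← mul_assoc, ← ENNReal.ofReal_mul (Real.rpow_nonneg hx.1.le _),
            ← ENNReal.ofReal_mul (by positivity)]
          congr 2
          rw [div_eq_mul_inv, ← mul_assoc, ← Real.rpow_add hx.1,
            show 2*α-3 + (1-α) = α - 2 by ring]
          ring
  refine le_trans stepB ?_
  have stepC : ∫⁻ x in Ioo (0:ℝ) 1, ENNReal.ofReal (x ^ (α-2)) * J x
      ≤ ENNReal.ofReal ((α-1)⁻¹) * ∫⁻ y in Ioo (0:ℝ) 1, G y ^ 2 * ENNReal.ofReal y := by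
    set F : ℝ → ℝ → ℝ≥0∞ := fun x y =>
      (Ioo x (1:ℝ)).indicator
        (fun y => ENNReal.ofReal (x ^ (α-2)) * (ENNReal.ofReal (y ^ (2-α)) * G y ^ 2)) y
      with hF
    have hFmeas : AEMeasurable (Function.uncurry F)
        ((volume.restrict (Ioo (0:ℝ) 1)).prod (volume.restrict (Ioo (0:ℝ) 1))) := by
      have : Function.uncurry F = fun p : ℝ × ℝ =>
          Set.indicator {p : ℝ × ℝ | p.1 < p.2 ∧ p.2 < 1}
            (fun p => ENNReal.ofReal (p.1 ^ (α-2)) *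
              (ENNReal.ofReal (p.2 ^ (2-α)) * G p.2 ^ 2)) p := by
        funext p
        simp only [Function.uncurry, hF, Set.indicator, mem_Ioo, mem_setOf_eq]
      rw [this]
      apply Measurable.aemeasurable
      apply Measurable.indicator
      · exact ((ENNReal.measurable_ofReal.comp (measurable_fst.pow measurable_const)).mul
          ((ENNReal.measurable_ofReal.comp (measurable_snd.pow measurable_const)).mul
            ((hG.comp measurable_snd).pow_const 2)))
      · exact MeasurableSet.inter
          (measurableSet_lt measurable_fst measurable_snd)
          (measurableSet_lt measurable_snd measurable_const)
    have eq1 : ∀ x ∈ Ioo (0:ℝ) 1,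
        ENNReal.ofReal (x ^ (α-2)) * J x = ∫⁻ y in Ioo (0:ℝ) 1, F x y := by
      intro x hx
      rw [hJ]
      simp only [hF]
      rw [lintegral_indicator measurableSet_Ioo,
        Measure.restrict_restrict measurableSet_Ioo]
      have : Ioo x (1:ℝ) ∩ Ioo 0 1 = Ioo x 1 := by
        apply inter_eq_left.mpr
        exact Ioo_subset_Ioo hx.1.le le_rfl
      rw [this, ← lintegral_const_mul' _ _ ENNReal.ofReal_ne_top]
    have swap : ∫⁻ x in Ioo (0:ℝ) 1, ∫⁻ y in Ioo (0:ℝ) 1, F x y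
        = ∫⁻ y in Ioo (0:ℝ) 1, ∫⁻ x in Ioo (0:ℝ) 1, F x y :=
      lintegral_lintegral_swap hFmeas
    calc ∫⁻ x in Ioo (0:ℝ) 1, ENNReal.ofReal (x ^ (α-2)) * J x
        = ∫⁻ x in Ioo (0:ℝ) 1, ∫⁻ y in Ioo (0:ℝ) 1, F x y := by
          apply lintegral_congr_ae
          filter_upwards [ae_restrict_mem measurableSet_Ioo] with x hx
          exact eq1 x hx
      _ = ∫⁻ y in Ioo (0:ℝ) 1, ∫⁻ x in Ioo (0:ℝ) 1, F x y := swap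
      _ ≤ ∫⁻ y in Ioo (0:ℝ) 1, ENNReal.ofReal ((α-1)⁻¹) * (G y ^ 2 * ENNReal.ofReal y) := by
          apply lintegral_mono_ae
          filter_upwards [ae_restrict_mem measurableSet_Ioo] with y hy
          have inner_eq : ∫⁻ x in Ioo (0:ℝ) 1, F x y
              = (∫⁻ x in Ioo (0:ℝ) y, ENNReal.ofReal (x ^ (α-2))) *
                  (ENNReal.ofReal (y ^ (2-α)) * G y ^ 2) := by
            have hFy : ∀ x : ℝ, F x y = (Iio y).indicator
                (fun x => ENNReal.ofReal (x ^ (α-2)) *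
                  (ENNReal.ofReal (y ^ (2-α)) * G y ^ 2)) x := by
              intro x
              simp only [hF, Set.indicator, mem_Ioo, mem_Iio]
              by_cases h : x < y
              · simp [h, hy.2]
              · simp [h]
            simp_rw [hFy]
            rw [lintegral_indicator measurableSet_Iio,
              Measure.restrict_restrict measurableSet_Iio]
            have : Iio y ∩ Ioo 0 1 = Ioo 0 y := by
              ext t; simp only [mem_inter_iff, mem_Iio, mem_Ioo]
              constructor
              · rintro ⟨h1, h2, _⟩; exact ⟨h2, h1⟩
              · rintro ⟨h2, h1⟩; exact ⟨h1, h2, lt_trans h1 hy.2⟩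
            rw [this, lintegral_mul_const]
            exact ENNReal.measurable_ofReal.comp (measurable_id.pow measurable_const)
          rw [inner_eq]
          rw [lint_rpow_Ioo (α-2) (by linarith) y hy.1.le,
            show α - 2 + 1 = α - 1 by ring]
          rw [← mul_assoc, ← ENNReal.ofReal_mul
            (div_nonneg (Real.rpow_nonneg hy.1.le _) (by linarith))]
          have : y ^ (α-1) / (α-1) * y ^ (2-α) = (α-1)⁻¹ * y := by
            rw [div_mul_eq_mul_div, ← Real.rpow_add hy.1,
              show α-1 + (2-α) = 1 by ring, Real.rpow_one, div_eq_mul_inv]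
            ring
          rw [this, ENNReal.ofReal_mul (by positivity)]
          exact le_of_eq (by ring)
      _ = ENNReal.ofReal ((α-1)⁻¹) * ∫⁻ y in Ioo (0:ℝ) 1, G y ^ 2 * ENNReal.ofReal y := by
          rw [← lintegral_const_mul' _ _ ENNReal.ofReal_ne_top]
  calc ENNReal.ofReal (α-1)⁻¹ * ∫⁻ x in Ioo (0:ℝ) 1, ENNReal.ofReal (x ^ (α-2)) * J x
      ≤ ENNReal.ofReal (α-1)⁻¹ *
        (ENNReal.ofReal ((α-1)⁻¹) * ∫⁻ y in Ioo (0:ℝ) 1, G y ^ 2 * ENNReal.ofReal y) :=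
        mul_le_mul_right stepC _
    _ = ENNReal.ofReal ((α-1)⁻¹) ^ 2 * ∫⁻ y in Ioo (0:ℝ) 1, G y ^ 2 * ENNReal.ofReal y := by
        rw [← mul_assoc, sq]


/-- For `α > 1` the operators `(1/x)A_α` and `(1/x)A_α^*` are bounded on `L²_x`:
there is `C = C(α) > 0` with `‖x⁻¹ A_α φ‖ ≤ C‖φ‖` and `‖x⁻¹ A_α^* φ‖ ≤ C‖φ‖`
for every `φ ∈ L²_x`. -/
theorem bounded_on_L2x (α : ℝ) (hα : 1 < α) :
    ∃ C : ℝ, 0 < C ∧ ∀ φ : ℝ → ℝ, Measurable φ → eL2x φ < ⊤ →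
      eL2x (fun x => Aa α φ x / x) ≤ ENNReal.ofReal C * eL2x φ ∧
      eL2x (fun x => Astar α φ x / x) ≤ ENNReal.ofReal C * eL2x φ := by
  have hα0 : 0 < α := by linarith
  have hα1 : 0 < α - 1 := by linarith
  refine ⟨(α-1)⁻¹, by positivity, fun φ hφ _ => ?_⟩
  set G : ℝ → ℝ≥0∞ := fun y => ENNReal.ofReal |φ y| with hGdef
  have hG : Measurable G := ENNReal.measurable_ofReal.comp hφ.abs
  have hmul : Measurable fun y : ℝ => y ^ α * φ y :=
    (measurable_id.pow measurable_const).mul hφ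
  have hmul2 : Measurable fun y : ℝ => y ^ (1-α) * φ y :=
    (measurable_id.pow measurable_const).mul hφ
  -- RHS rewriting
  have hRHS : ∫⁻ y in Ioo (0:ℝ) 1, G y ^ 2 * ENNReal.ofReal y
      = ∫⁻ y in Ioo (0:ℝ) 1, ENNReal.ofReal (φ y ^ 2 * y) := by
    apply lintegral_congr_ae
    filter_upwards [ae_restrict_mem measurableSet_Ioo] with y hy
    rw [hGdef, ← ENNReal.ofReal_pow (abs_nonneg _), sq_abs,
      ← ENNReal.ofReal_mul (sq_nonneg _)]
  -- a generic bound for the inner integrals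
  have inner_bound : ∀ (c : ℝ) (s : Set ℝ), MeasurableSet s → s ⊆ Ioi (0:ℝ) →
      ENNReal.ofReal |∫ y in s, y ^ c * φ y| ≤ ∫⁻ y in s, ENNReal.ofReal (y ^ c) * G y := by
    intro c s hs hspos
    have habs : |∫ y in s, y ^ c * φ y| ≤ ∫ y in s, |y ^ c * φ y| := by
      simpa only [Real.norm_eq_abs] using
        norm_integral_le_integral_norm (μ := volume.restrict s) (fun y => y ^ c * φ y)
    have hmeas : AEStronglyMeasurable (fun y : ℝ => |y ^ c * φ y|)
        (volume.restrict s) :=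
      (((measurable_id.pow measurable_const).mul hφ).abs).aestronglyMeasurable
    have heq : ∫ y in s, |y ^ c * φ y|
        = (∫⁻ y in s, ENNReal.ofReal |y ^ c * φ y|).toReal :=
      integral_eq_lintegral_of_nonneg_ae (Filter.Eventually.of_forall fun y => abs_nonneg _)
        hmeas
    have hcong : (∫⁻ y in s, ENNReal.ofReal |y ^ c * φ y|)
        = ∫⁻ y in s, ENNReal.ofReal (y ^ c) * G y := by
      apply lintegral_congr_ae
      filter_upwards [ae_restrict_mem hs] with y hy
      have hy0 : 0 < y := hspos hy
      rw [abs_mul, abs_of_nonneg (Real.rpow_nonneg hy0.le c),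
        ENNReal.ofReal_mul (Real.rpow_nonneg hy0.le c)]
    calc ENNReal.ofReal |∫ y in s, y ^ c * φ y|
        ≤ ENNReal.ofReal (∫ y in s, |y ^ c * φ y|) := ENNReal.ofReal_le_ofReal habs
      _ = ENNReal.ofReal ((∫⁻ y in s, ENNReal.ofReal |y ^ c * φ y|).toReal) := by rw [heq]
      _ ≤ ∫⁻ y in s, ENNReal.ofReal |y ^ c * φ y| := ENNReal.ofReal_toReal_le
      _ = ∫⁻ y in s, ENNReal.ofReal (y ^ c) * G y := hcong
  constructor
  · -- the operator Aa
    have ptwise : ∀ᵐ x ∂(volume.restrict (Ioo (0:ℝ) 1)),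
        ENNReal.ofReal ((Aa α φ x / x) ^ 2 * x)
          ≤ ENNReal.ofReal (x ^ (-2*α-1)) *
              (∫⁻ y in Ioo (0:ℝ) x, ENNReal.ofReal (y ^ α) * G y) ^ 2 := by
      filter_upwards [ae_restrict_mem measurableSet_Ioo] with x hx
      have hx0 : 0 < x := hx.1
      set I : ℝ := ∫ y in Ioo (0:ℝ) x, y ^ α * φ y with hI
      have hkey : x ^ (-2*α-1) = x ^ (-α) * x ^ (-α) * x⁻¹ := by
        rw [← Real.rpow_neg_one x, ← Real.rpow_add hx0, ← Real.rpow_add hx0]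
        congr 1; ring
      have e : (Aa α φ x / x) ^ 2 * x = x ^ (-2*α-1) * I ^ 2 := by
        rw [Aa, hkey, ← hI]
        field_simp
      rw [e, ENNReal.ofReal_mul (Real.rpow_nonneg hx0.le _)]
      apply mul_le_mul_right
      have : ENNReal.ofReal (I ^ 2) = ENNReal.ofReal |I| ^ 2 := by
        rw [← ENNReal.ofReal_pow (abs_nonneg _), sq_abs]
      rw [this]
      exact pow_le_pow_left' (inner_bound α (Ioo 0 x) measurableSet_Ioo
        (fun y hy => hy.1)) 2
    have step := lintegral_mono_ae ptwise
    have := le_trans step (key1 α hα G hG)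
    rw [hRHS] at this
    calc eL2x (fun x => Aa α φ x / x)
        ≤ (ENNReal.ofReal α⁻¹ ^ 2 * ∫⁻ y in Ioo (0:ℝ) 1,
            ENNReal.ofReal (φ y ^ 2 * y)) ^ (1/2:ℝ) := by
          apply ENNReal.rpow_le_rpow _ (by norm_num)
          exact this
      _ = ENNReal.ofReal α⁻¹ * eL2x φ := by
          rw [ENNReal.mul_rpow_of_nonneg _ _ (by norm_num), eL2x]
          congr 1
          rw [← ENNReal.rpow_natCast (ENNReal.ofReal α⁻¹) 2, ← ENNReal.rpow_mul]
          norm_num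
      _ ≤ ENNReal.ofReal (α-1)⁻¹ * eL2x φ := by
          apply mul_le_mul_left
          apply ENNReal.ofReal_le_ofReal
          apply inv_anti₀ hα1
          linarith
  · -- the operator Astar
    have ptwise : ∀ᵐ x ∂(volume.restrict (Ioo (0:ℝ) 1)),
        ENNReal.ofReal ((Astar α φ x / x) ^ 2 * x)
          ≤ ENNReal.ofReal (x ^ (2*α-3)) *
              (∫⁻ y in Ioo x (1:ℝ), ENNReal.ofReal (y ^ (1-α)) * G y) ^ 2 := by
      filter_upwards [ae_restrict_mem measurableSet_Ioo] with x hx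
      have hx0 : 0 < x := hx.1
      set I : ℝ := ∫ y in Ioo x (1:ℝ), y ^ (1-α) * φ y with hI
      have hkey : x ^ (2*α-3) = x ^ (α-1) * x ^ (α-1) * x⁻¹ := by
        rw [← Real.rpow_neg_one x, ← Real.rpow_add hx0, ← Real.rpow_add hx0]
        congr 1; ring
      have e : (Astar α φ x / x) ^ 2 * x = x ^ (2*α-3) * I ^ 2 := by
        rw [Astar, hkey, ← hI]
        field_simp
      rw [e, ENNReal.ofReal_mul (Real.rpow_nonneg hx0.le _)]
      apply mul_le_mul_right
      have : ENNReal.ofReal (I ^ 2) = ENNReal.ofReal |I| ^ 2 := by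
        rw [← ENNReal.ofReal_pow (abs_nonneg _), sq_abs]
      rw [this]
      exact pow_le_pow_left' (inner_bound (1-α) (Ioo x 1) measurableSet_Ioo
        (fun y hy => lt_trans hx0 hy.1)) 2
    have step := lintegral_mono_ae ptwise
    have := le_trans step (key2 α hα G hG)
    rw [hRHS] at this
    calc eL2x (fun x => Astar α φ x / x)
        ≤ (ENNReal.ofReal (α-1)⁻¹ ^ 2 * ∫⁻ y in Ioo (0:ℝ) 1,
            ENNReal.ofReal (φ y ^ 2 * y)) ^ (1/2:ℝ) := by
          apply ENNReal.rpow_le_rpow _ (by norm_num)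
          exact this
      _ = ENNReal.ofReal (α-1)⁻¹ * eL2x φ := by
          rw [ENNReal.mul_rpow_of_nonneg _ _ (by norm_num), eL2x]
          congr 1
          rw [← ENNReal.rpow_natCast (ENNReal.ofReal (α-1)⁻¹) 2, ← ENNReal.rpow_mul]
          norm_num
end

section
/- Let α > 1 and let u : (0,1) → ℝ be differentiable with u ∈ L²_x and D_{x,α}u ∈ L²_x. Then u(x) = (A_α(D_{x,α}u))(x) for every x ∈ (0,1). -/
open MeasureTheory Set
open scoped ENNReal

/-- For `α > 1` and `u` differentiable on `(0,1)` with `u ∈ L²_x` and `D_{x,α} u ∈ L²_x`,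
one has `u = A_α(D_{x,α} u)` on `(0,1)`. -/
theorem repr_via_Aa (α : ℝ) (hα : 1 < α) (u : ℝ → ℝ)
    (hdiff : ∀ x ∈ Ioo (0:ℝ) 1, DifferentiableAt ℝ u x)
    (hu : MemL2x u) (hDu : MemL2x (Dtw α u)) :
    ∀ x ∈ Ioo (0:ℝ) 1, u x = Aa α (Dtw α u) x := by
  intro x hx
  obtain ⟨hx0, hx1⟩ := hx
  set g : ℝ → ℝ := fun y => y ^ α * Dtw α u y with hgdef
  -- continuity of u on (0,1)
  have hu_cont : ContinuousOn u (Ioo (0:ℝ) 1) := fun y hy =>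
    (hdiff y hy).continuousAt.continuousWithinAt
  -- measurability of g on (0,1)
  have hmeasD : AEStronglyMeasurable (Dtw α u) (volume.restrict (Ioo (0:ℝ) 1)) := by
    have h1 : AEStronglyMeasurable (deriv u) (volume.restrict (Ioo (0:ℝ) 1)) :=
      (measurable_deriv u).aestronglyMeasurable
    have h2 : ContinuousOn (fun y => (α / y) * u y) (Ioo (0:ℝ) 1) := by
      refine ContinuousOn.mul ?_ hu_cont
      exact continuousOn_const.div continuousOn_id (fun y hy => ne_of_gt hy.1)
    exact h1.add (h2.aestronglyMeasurable measurableSet_Ioo)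
  have hmeasg : AEStronglyMeasurable g (volume.restrict (Ioo (0:ℝ) 1)) := by
    refine AEStronglyMeasurable.mul ?_ hmeasD
    exact (continuousOn_id.rpow_const fun y hy =>
      Or.inl (ne_of_gt hy.1)).aestronglyMeasurable measurableSet_Ioo
  -- pointwise bound for g
  have hbound : ∀ y ∈ Ioo (0:ℝ) 1, ‖g y‖ ≤ (y ^ (2*α - 1) + (Dtw α u y)^2 * y) / 2 := by
    intro y hy
    have hy0 : (0:ℝ) < y := hy.1
    have hPQ : y ^ (α - 1/2) * y ^ (1/2 : ℝ) = y ^ α := by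
      rw [← Real.rpow_add hy0, show α - 1/2 + 1/2 = α by ring]
    have hP2 : y ^ (α - 1/2) * y ^ (α - 1/2) = y ^ (2*α - 1) := by
      rw [← Real.rpow_add hy0, show α - 1/2 + (α - 1/2) = 2*α - 1 by ring]
    have hQ2 : y ^ (1/2 : ℝ) * y ^ (1/2 : ℝ) = y := by
      rw [← Real.rpow_add hy0, show (1:ℝ)/2 + 1/2 = 1 by norm_num, Real.rpow_one]
    have hP : 0 ≤ y ^ (α - 1/2) := Real.rpow_nonneg hy0.le _
    have hQ : 0 ≤ y ^ (1/2 : ℝ) := Real.rpow_nonneg hy0.le _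
    have hga : ‖g y‖ = y ^ α * |Dtw α u y| := by
      simp [hgdef, Real.norm_eq_abs, abs_mul, abs_of_nonneg (Real.rpow_nonneg hy0.le α)]
    rw [hga]
    nlinarith [sq_nonneg (y ^ (α - 1/2) - |Dtw α u y| * y ^ (1/2:ℝ)),
      abs_nonneg (Dtw α u y), sq_abs (Dtw α u y)]
  -- integrability of g on (0,1)
  have h1int : IntegrableOn (fun y : ℝ => y ^ (2*α - 1)) (Ioo (0:ℝ) 1) :=
    (intervalIntegral.integrableOn_Ioo_rpow_iff one_pos).2 (by linarith)
  have hbint : IntegrableOn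
      (fun y => (y ^ (2*α - 1) + (Dtw α u y)^2 * y) / 2) (Ioo (0:ℝ) 1) :=
    (h1int.add hDu).div_const 2
  have hg_int : IntegrableOn g (Ioo (0:ℝ) 1) :=
    hbint.mono' hmeasg ((ae_restrict_iff' measurableSet_Ioo).2 (ae_of_all _ hbound))
  -- derivative of F(y) = y^α u(y)
  have hF : ∀ y ∈ Ioo (0:ℝ) 1, HasDerivAt (fun y => y ^ α * u y) (g y) y := by
    intro y hy
    have hy0 : (0:ℝ) < y := hy.1
    have h1 : HasDerivAt (fun y : ℝ => y ^ α) (α * y ^ (α - 1)) y :=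
      Real.hasDerivAt_rpow_const (Or.inl hy0.ne')
    have h2 : HasDerivAt u (deriv u y) y := (hdiff y hy).hasDerivAt
    have h3 : HasDerivAt (fun y => y ^ α * u y) (α * y ^ (α - 1) * u y + y ^ α * deriv u y) y :=
      h1.mul h2
    convert h3 using 1
    have hpow : y ^ (α - 1) = y ^ α / y := by
      rw [Real.rpow_sub hy0, Real.rpow_one]
    simp only [hgdef, Dtw, hpow]
    field_simp
    ring
  -- interval integrability
  have hg0x : IntervalIntegrable g volume 0 x := by
    rw [intervalIntegrable_iff_integrableOn_Ioc_of_le hx0.le]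
    exact hg_int.mono_set (fun y hy => ⟨hy.1, lt_of_le_of_lt hy.2 hx1⟩)
  -- continuity of the primitive
  have hHcont : ContinuousOn (fun b => ∫ t in (0:ℝ)..b, g t) (Icc 0 x) := by
    have := intervalIntegral.continuousOn_primitive_interval' hg0x (left_mem_uIcc)
    rwa [uIcc_of_le hx0.le] at this
  set C : ℝ := x ^ α * u x - ∫ t in (0:ℝ)..x, g t with hCdef
  -- FTC identity
  have key : ∀ a ∈ Ioo (0:ℝ) x, a ^ α * u a = C + ∫ t in (0:ℝ)..a, g t := by
    intro a ha
    have ha0 : (0:ℝ) < a := ha.1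
    have hax : a < x := ha.2
    have hgax : IntervalIntegrable g volume a x := by
      rw [intervalIntegrable_iff_integrableOn_Ioc_of_le hax.le]
      exact hg_int.mono_set (fun y hy => ⟨lt_trans ha0 hy.1, lt_of_le_of_lt hy.2 hx1⟩)
    have hg0a : IntervalIntegrable g volume 0 a := by
      rw [intervalIntegrable_iff_integrableOn_Ioc_of_le ha0.le]
      exact hg_int.mono_set (fun y hy => ⟨hy.1, lt_of_le_of_lt hy.2 (lt_trans hax hx1)⟩)
    have hftc : ∫ y in a..x, g y = x ^ α * u x - a ^ α * u a := by
      have hd : ∀ t ∈ uIcc a x, HasDerivAt (fun y => y ^ α * u y) (g t) t := by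
        intro t ht
        rw [uIcc_of_le hax.le] at ht
        exact hF t ⟨lt_of_lt_of_le ha0 ht.1, lt_of_le_of_lt ht.2 hx1⟩
      exact intervalIntegral.integral_eq_sub_of_hasDerivAt hd hgax
    have hadd : (∫ t in (0:ℝ)..a, g t) + ∫ y in a..x, g y = ∫ t in (0:ℝ)..x, g t :=
      intervalIntegral.integral_add_adjacent_intervals hg0a hgax
    rw [hftc] at hadd
    rw [hCdef]
    linarith
  -- the constant vanishes
  have hC : C = 0 := by
    by_contra hC0
    have hC2 : (0:ℝ) < C ^ 2 :=
      lt_of_le_of_ne (sq_nonneg C) (Ne.symm (pow_ne_zero 2 hC0))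
    have hH0 : Filter.Tendsto (fun b => ∫ t in (0:ℝ)..b, g t) (nhdsWithin 0 (Ioo 0 x)) (nhds 0) := by
      have h0mem : (0:ℝ) ∈ Icc (0:ℝ) x := ⟨le_refl _, hx0.le⟩
      have hcw := hHcont 0 h0mem
      rw [ContinuousWithinAt, intervalIntegral.integral_same] at hcw
      exact hcw.mono_left (nhdsWithin_mono 0 Ioo_subset_Icc_self)
    have hev : ∀ᶠ a in nhdsWithin 0 (Ioo (0:ℝ) x), |∫ t in (0:ℝ)..a, g t| < |C| / 2 := by
      have hpos : (0:ℝ) < |C| / 2 := by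
        have : 0 < |C| := abs_pos.2 hC0
        linarith
      have := hH0 (Metric.ball_mem_nhds 0 hpos)
      filter_upwards [this] with a ha
      simpa [Real.dist_eq] using ha
    rw [eventually_nhdsWithin_iff, Metric.eventually_nhds_iff] at hev
    obtain ⟨ε, hε, hball⟩ := hev
    set ε' : ℝ := min ε x with hε'def
    have hε'0 : 0 < ε' := lt_min hε hx0
    have hε'x : ε' ≤ x := min_le_right _ _
    have hbd : ∀ a ∈ Ioo (0:ℝ) ε', |∫ t in (0:ℝ)..a, g t| < |C| / 2 := by
      intro a ha
      have haIoo : a ∈ Ioo 0 x := ⟨ha.1, lt_of_lt_of_le ha.2 hε'x⟩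
      refine hball ?_ haIoo
      rw [Real.dist_eq, sub_zero, abs_of_pos ha.1]
      exact lt_of_lt_of_le ha.2 (min_le_left _ _)
    -- comparison: a^{1-2α} integrable near 0, contradiction
    have huε : IntegrableOn (fun a => (4 / C^2) * (u a ^ 2 * a)) (Ioo (0:ℝ) ε') :=
      (hu.mono_set (fun a ha => ⟨ha.1,
        lt_of_lt_of_le ha.2 (le_trans hε'x hx1.le)⟩)).const_mul _
    have hmeasr : AEStronglyMeasurable (fun a : ℝ => a ^ (1 - 2*α))
        (volume.restrict (Ioo (0:ℝ) ε')) :=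
      (continuousOn_id.rpow_const fun a ha =>
        Or.inl (ne_of_gt ha.1)).aestronglyMeasurable measurableSet_Ioo
    have hri : IntegrableOn (fun a : ℝ => a ^ (1 - 2*α)) (Ioo (0:ℝ) ε') := by
      refine huε.mono' hmeasr ?_
      rw [ae_restrict_iff' measurableSet_Ioo]
      refine ae_of_all _ ?_
      intro a ha
      have ha0 : (0:ℝ) < a := ha.1
      have haIoo : a ∈ Ioo 0 x := ⟨ha.1, lt_of_lt_of_le ha.2 hε'x⟩
      have hru : a ^ α * u a = C + ∫ t in (0:ℝ)..a, g t := key a haIoo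
      have habs1 : |C| ≤ |C + ∫ t in (0:ℝ)..a, g t| + |∫ t in (0:ℝ)..a, g t| := by
        have := abs_add_le (C + ∫ t in (0:ℝ)..a, g t) (-(∫ t in (0:ℝ)..a, g t))
        simpa using this
      have habs : |C| / 2 ≤ |C + ∫ t in (0:ℝ)..a, g t| := by
        have := hbd a ha
        linarith
      have hsq : C ^ 2 / 4 ≤ (a ^ α * u a) ^ 2 := by
        rw [hru]
        have h2' := mul_self_le_mul_self (by positivity : (0:ℝ) ≤ |C| / 2) habs
        have e1 : C ^ 2 / 4 = |C| / 2 * (|C| / 2) := by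
          rw [show |C| / 2 * (|C| / 2) = |C| * |C| / 4 by ring, abs_mul_abs_self]; ring
        have e2 : |C + ∫ t in (0:ℝ)..a, g t| * |C + ∫ t in (0:ℝ)..a, g t|
            = (C + ∫ t in (0:ℝ)..a, g t) ^ 2 := by
          rw [abs_mul_abs_self]; ring
        exact le_trans (le_of_eq e1) (h2'.trans (le_of_eq e2))
      have hr2 : a ^ (1 - 2*α) * (a ^ α * a ^ α) = a := by
        rw [← Real.rpow_add ha0, ← Real.rpow_add ha0,
          show 1 - 2*α + (α + α) = (1:ℝ) by ring, Real.rpow_one]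
      have heq : (a ^ α * u a) ^ 2 * a ^ (1 - 2*α) = u a ^ 2 * a := by
        have h' : (a ^ α * u a) ^ 2 * a ^ (1 - 2*α)
            = (a ^ (1 - 2*α) * (a ^ α * a ^ α)) * u a ^ 2 := by ring
        rw [h', hr2]; ring
      have hmul := mul_le_mul_of_nonneg_right hsq (Real.rpow_nonneg ha0.le (1 - 2*α))
      rw [heq] at hmul
      have h'' : C ^ 2 / 4 * a ^ (1 - 2*α) ≤ u a ^ 2 * a := hmul
      have hnorm : ‖a ^ (1 - 2*α)‖ = a ^ (1 - 2*α) := by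
        rw [Real.norm_eq_abs, abs_of_nonneg (Real.rpow_nonneg ha0.le _)]
      rw [hnorm]
      calc a ^ (1 - 2*α) = 4 / C ^ 2 * (C ^ 2 / 4 * a ^ (1 - 2*α)) := by
            field_simp
        _ ≤ 4 / C ^ 2 * (u a ^ 2 * a) := by
            refine mul_le_mul_of_nonneg_left h'' ?_
            positivity
    rw [intervalIntegral.integrableOn_Ioo_rpow_iff hε'0] at hri
    linarith
  -- conclude
  have h1 : x ^ α * u x = ∫ t in (0:ℝ)..x, g t := by
    have h := hC
    rw [hCdef] at h
    linarith
  have h2 : (∫ t in (0:ℝ)..x, g t) = ∫ y in Ioo (0:ℝ) x, g y := by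
    rw [intervalIntegral.integral_of_le hx0.le, integral_Ioc_eq_integral_Ioo]
  have hfin : u x = x ^ (-α) * ∫ y in Ioo (0:ℝ) x, g y := by
    rw [← h2, ← h1, ← mul_assoc, ← Real.rpow_add hx0,
      show -α + α = (0:ℝ) by ring, Real.rpow_zero, one_mul]
  simpa only [Aa, hgdef] using hfin
end

section
/- Let α > 1 and let u : (0,1) → ℝ be differentiable with u ∈ L²_x and D*_{x,α}u ∈ L²_x. Then there exists a real constant c such that u(x) = (A_α^*(D*_{x,α}u))(x) + c x^{α−1} for every x ∈ (0,1), and moreover |c| ≤ C (‖u‖_{L²_x} + ‖D*_{x,α}u‖_{L²_x}) for a constant C depending only on α. -/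
open MeasureTheory Set
open scoped ENNReal

lemma contOn {u : ℝ → ℝ} (hu : ∀ x ∈ Ioo (0:ℝ) 1, DifferentiableAt ℝ u x) :
    ContinuousOn u (Ioo (0:ℝ) 1) :=
  fun x hx => (hu x hx).continuousAt.continuousWithinAt

lemma dstar_meas (α : ℝ) {u : ℝ → ℝ} (hu : ∀ x ∈ Ioo (0:ℝ) 1, DifferentiableAt ℝ u x) :
    AEStronglyMeasurable (Dstar α u) (volume.restrict (Ioo (0:ℝ) 1)) := by
  have h1 : AEStronglyMeasurable (fun x => deriv u x) (volume.restrict (Ioo (0:ℝ) 1)) :=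
    (measurable_deriv u).aestronglyMeasurable
  have h2 : ContinuousOn (fun x => ((α - 1)/x) * u x) (Ioo (0:ℝ) 1) := by
    apply ContinuousOn.mul _ (contOn hu)
    exact continuousOn_const.div continuousOn_id (fun x hx => ne_of_gt hx.1)
  exact h1.neg.add (h2.aestronglyMeasurable measurableSet_Ioo)

lemma aux_int (α : ℝ) (hα : 1 < α) {u : ℝ → ℝ}
    (hu : ∀ x ∈ Ioo (0:ℝ) 1, DifferentiableAt ℝ u x)
    (hf : MemL2x (Dstar α u)) {a : ℝ} (ha : a ∈ Ioo (0:ℝ) 1) :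
    IntegrableOn (fun y => y ^ (1 - α) * Dstar α u y) (Ioc a 1) := by
  set f := Dstar α u with hfdef
  have hsub : Ioo a 1 ⊆ Ioo (0:ℝ) 1 := Ioo_subset_Ioo (le_of_lt ha.1) le_rfl
  have hres : volume.restrict (Ioc a (1:ℝ)) = volume.restrict (Ioo a 1) :=
    Measure.restrict_congr_set Ioo_ae_eq_Ioc.symm
  have hmeas : AEStronglyMeasurable f (volume.restrict (Ioc a (1:ℝ))) := by
    rw [hres]
    exact (dstar_meas α hu).mono_measure (Measure.restrict_mono hsub le_rfl)
  have hmeas2 : AEStronglyMeasurable (fun y => y ^ (1 - α) * f y)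
      (volume.restrict (Ioc a (1:ℝ))) := by
    rw [hres]
    have hc : ContinuousOn (fun y : ℝ => y ^ (1 - α)) (Ioo a 1) := fun y hy =>
      (Real.continuousAt_rpow_const y _
        (Or.inl (ne_of_gt (lt_trans ha.1 hy.1)))).continuousWithinAt
    exact (hc.aestronglyMeasurable measurableSet_Ioo).mul
      ((dstar_meas α hu).mono_measure (Measure.restrict_mono hsub le_rfl))
  have hsq : IntegrableOn (fun y => f y ^ 2 * y) (Ioc a 1) := by
    rw [IntegrableOn, hres]
    exact hf.mono_set hsub
  have hbd : IntegrableOn (fun y => (a ^ (1 - α - 1) / 2) * (f y ^ 2 * y) + a ^ (1 - α) / 2)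
      (Ioc a 1) :=
    (hsq.const_mul _).add (integrableOn_const measure_Ioc_lt_top.ne)
  apply hbd.mono' hmeas2
  refine Filter.eventually_of_mem (self_mem_ae_restrict measurableSet_Ioc) (fun y hy => ?_)
  have h0a : 0 < a := ha.1
  have hya : a ≤ y := le_of_lt hy.1
  have h0y : 0 < y := lt_of_lt_of_le h0a hya
  have hr : y ^ (1 - α) ≤ a ^ (1 - α) := Real.rpow_le_rpow_of_nonpos h0a hya (by linarith)
  have hr0 : (0:ℝ) ≤ y ^ (1 - α) := (Real.rpow_pos_of_pos h0y _).le
  have hBpos : (0:ℝ) < a ^ (1 - α) := Real.rpow_pos_of_pos h0a _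
  have hB'pos : (0:ℝ) < a ^ (1 - α - 1) := Real.rpow_pos_of_pos h0a _
  have hBB' : a ^ (1 - α) = a ^ (1 - α - 1) * a := by
    rw [← Real.rpow_add_one (ne_of_gt h0a)]; ring_nf
  rw [Real.norm_eq_abs, abs_mul, abs_of_nonneg hr0]
  have h1 : y ^ (1 - α) * |f y| ≤ a ^ (1 - α) * |f y| :=
    mul_le_mul_of_nonneg_right hr (abs_nonneg _)
  nlinarith [sq_nonneg (|f y| - 1), sq_abs (f y), abs_nonneg (f y),
    mul_le_mul_of_nonneg_left hya (sq_nonneg (f y)),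
    mul_le_mul_of_nonneg_left (mul_le_mul_of_nonneg_left hya (sq_nonneg (f y))) hB'pos.le]

lemma aux_ii (α : ℝ) (hα : 1 < α) {u : ℝ → ℝ}
    (hu : ∀ x ∈ Ioo (0:ℝ) 1, DifferentiableAt ℝ u x)
    (hf : MemL2x (Dstar α u)) {x b : ℝ} (hx : x ∈ Ioo (0:ℝ) 1) (hb : b ∈ Ioc (0:ℝ) 1) :
    IntervalIntegrable (fun y => y ^ (1 - α) * Dstar α u y) volume x b := by
  have hmin : min x b ∈ Ioo (0:ℝ) 1 :=
    ⟨lt_min hx.1 hb.1, lt_of_le_of_lt (min_le_left _ _) hx.2⟩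
  rw [intervalIntegrable_iff]
  apply (aux_int α hα hu hf hmin).mono_set
  intro y hy
  rw [Set.mem_uIoc] at hy
  rcases hy with ⟨h1, h2⟩ | ⟨h1, h2⟩
  · exact ⟨lt_of_le_of_lt (min_le_left _ _) h1, h2.trans hb.2⟩
  · exact ⟨lt_of_le_of_lt (min_le_right _ _) h1, h2.trans hx.2.le⟩

lemma aux_ftc (α : ℝ) (hα : 1 < α) {u : ℝ → ℝ}
    (hu : ∀ x ∈ Ioo (0:ℝ) 1, DifferentiableAt ℝ u x)
    (hf : MemL2x (Dstar α u)) {x x₀ : ℝ} (hx : x ∈ Ioo (0:ℝ) 1) (hx₀ : x₀ ∈ Ioo (0:ℝ) 1) :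
    x ^ (1 - α) * u x
      = x₀ ^ (1 - α) * u x₀ + ∫ y in x..x₀, y ^ (1 - α) * Dstar α u y := by
  have hder : ∀ t ∈ uIcc x x₀,
      HasDerivAt (fun y => y ^ (1 - α) * u y) (-(t ^ (1 - α) * Dstar α u t)) t := by
    intro t ht
    have htI : t ∈ Ioo (0:ℝ) 1 := Set.ordConnected_Ioo.uIcc_subset hx hx₀ ht
    have ht0 : (0:ℝ) < t := htI.1
    have h1 : HasDerivAt (fun y : ℝ => y ^ (1 - α)) ((1 - α) * t ^ (1 - α - 1)) t :=
      Real.hasDerivAt_rpow_const (Or.inl (ne_of_gt ht0))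
    have h2 : HasDerivAt u (deriv u t) t := (hu t htI).hasDerivAt
    have h3 : HasDerivAt (fun y => y ^ (1 - α) * u y)
        ((1 - α) * t ^ (1 - α - 1) * u t + t ^ (1 - α) * deriv u t) t := h1.mul h2
    convert h3 using 1
    have he : t ^ (1 - α - 1) = t ^ (1 - α) / t := by
      rw [Real.rpow_sub ht0, Real.rpow_one]
    rw [he]
    simp only [Dstar]
    field_simp
    ring
  have hii : IntervalIntegrable (fun y => -(y ^ (1 - α) * Dstar α u y)) volume x x₀ :=
    (aux_ii α hα hu hf hx ⟨hx₀.1, hx₀.2.le⟩).neg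
  have hkey := intervalIntegral.integral_eq_sub_of_hasDerivAt hder hii
  rw [intervalIntegral.integral_neg] at hkey
  linarith [hkey]

lemma exists_pt {u : ℝ → ℝ} (hc : ContinuousOn u (Ioo (0:ℝ) 1)) (hu : MemL2x u) :
    ∃ x₀ ∈ Ioo (1/2 : ℝ) 1, u x₀ ^ 2 ≤ 8 * ∫ x in Ioo (0:ℝ) 1, u x ^ 2 * x := by
  have hu' : IntegrableOn (fun x => u x ^ 2 * x) (Ioo (0:ℝ) 1) := hu
  set S := ∫ x in Ioo (0:ℝ) 1, u x ^ 2 * x with hS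
  have hS0 : 0 ≤ S :=
    setIntegral_nonneg measurableSet_Ioo (fun x hx => mul_nonneg (sq_nonneg _) hx.1.le)
  by_contra hcon
  push_neg at hcon
  have hsub : Ioo (1/2:ℝ) 1 ⊆ Ioo 0 1 := Ioo_subset_Ioo (by norm_num) le_rfl
  have hint : IntegrableOn (fun x => u x ^ 2 * x) (Ioo (1/2:ℝ) 1) := hu'.mono_set hsub
  have hlow : ∫ x in Ioo (1/2:ℝ) 1, (8*S) * x ≤ ∫ x in Ioo (1/2:ℝ) 1, u x ^ 2 * x := by
    apply setIntegral_mono_on _ hint measurableSet_Ioo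
    · intro x hx
      have h1 := hcon x hx
      have h2 : (0:ℝ) < x := by have := hx.1; linarith
      nlinarith
    · exact (((continuous_id.integrableOn_Icc).mono_set Ioo_subset_Icc_self :
        Integrable (fun x : ℝ => x) (volume.restrict (Ioo (1/2:ℝ) 1)))).const_mul _
  have hval : ∫ x in Ioo (1/2:ℝ) 1, (8*S) * x = 3 * S := by
    rw [integral_const_mul, ← integral_Ioc_eq_integral_Ioo,
      ← intervalIntegral.integral_of_le (by norm_num : (1/2:ℝ) ≤ 1)]
    rw [integral_id]
    ring
  have hup : ∫ x in Ioo (1/2:ℝ) 1, u x ^ 2 * x ≤ S := by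
    apply setIntegral_mono_set hu'
    · exact (ae_restrict_iff' measurableSet_Ioo).mpr
        (ae_of_all _ fun x hx => mul_nonneg (sq_nonneg _) hx.1.le)
    · exact HasSubset.Subset.eventuallyLE hsub
  have hSz : S = 0 := by linarith
  have hz : (fun x => u x ^ 2 * x) =ᵐ[volume.restrict (Ioo (0:ℝ) 1)] 0 := by
    apply (integral_eq_zero_iff_of_nonneg_ae _ hu').mp (by rw [← hS]; exact hSz)
    exact (ae_restrict_iff' measurableSet_Ioo).mpr
      (ae_of_all _ fun x hx => mul_nonneg (sq_nonneg _) hx.1.le)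
  have hz2 : (fun x => u x ^ 2 * x) =ᵐ[volume.restrict (Ioo (1/2:ℝ) 1)] 0 :=
    hz.filter_mono (ae_mono (Measure.restrict_mono hsub le_rfl))
  have hfalse : ∀ᵐ x ∂(volume.restrict (Ioo (1/2:ℝ) 1)), False := by
    filter_upwards [hz2, ae_restrict_mem measurableSet_Ioo] with x h1 h2
    have h3 := hcon x h2
    rw [hSz] at h3
    have hx0 : (0:ℝ) < x := by have := h2.1; linarith
    have : u x ^ 2 * x > 0 := mul_pos (by nlinarith) hx0
    simp only [Pi.zero_apply] at h1
    linarith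
  have hbot := Filter.eventually_false_iff_eq_bot.mp hfalse
  rw [ae_eq_bot, Measure.restrict_eq_zero] at hbot
  rw [Real.volume_Ioo] at hbot
  simp at hbot
  norm_num at hbot

lemma term2 (α : ℝ) (hα : 1 < α) {u : ℝ → ℝ}
    (hu : ∀ x ∈ Ioo (0:ℝ) 1, DifferentiableAt ℝ u x)
    (hf : MemL2x (Dstar α u)) :
    ∫ y in Ioo (1/2:ℝ) 1, |y ^ (1 - α) * Dstar α u y|
      ≤ 2 ^ (α - 1) * (2 * L2xNorm (Dstar α u)) := by
  set f := Dstar α u with hfdef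
  have hf' : IntegrableOn (fun y => f y ^ 2 * y) (Ioo (0:ℝ) 1) := hf
  set T := L2xNorm f with hT
  have hsub : Ioo (1/2:ℝ) 1 ⊆ Ioo 0 1 := Ioo_subset_Ioo (by norm_num) le_rfl
  have hSnn : 0 ≤ ∫ y in Ioo (0:ℝ) 1, f y ^ 2 * y :=
    setIntegral_nonneg measurableSet_Ioo (fun y hy => mul_nonneg (sq_nonneg _) hy.1.le)
  have hT0 : 0 ≤ T := Real.sqrt_nonneg _
  have hTsq : T ^ 2 = ∫ y in Ioo (0:ℝ) 1, f y ^ 2 * y := Real.sq_sqrt hSnn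
  have hB12 : (2:ℝ) ^ (α - 1) = ((1:ℝ)/2) ^ (1 - α) := by
    rw [one_div, Real.inv_rpow (by norm_num : (0:ℝ) ≤ 2), ← Real.rpow_neg (by norm_num)]
    ring_nf
  have hBpos : (0:ℝ) < 2 ^ (α - 1) := Real.rpow_pos_of_pos (by norm_num) _
  have habsint : IntegrableOn (fun y => |y ^ (1 - α) * f y|) (Ioo (1/2:ℝ) 1) :=
    ((aux_int α hα hu hf (by norm_num : (1/2:ℝ) ∈ Ioo (0:ℝ) 1)).mono_set
      Ioo_subset_Ioc_self).abs
  rcases eq_or_lt_of_le hT0 with h0 | hTpos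
  · -- T = 0 : the integrand vanishes a.e.
    have hSz : ∫ y in Ioo (0:ℝ) 1, f y ^ 2 * y = 0 := by
      rw [← hTsq, ← h0]; norm_num
    have hz : (fun y => f y ^ 2 * y) =ᵐ[volume.restrict (Ioo (0:ℝ) 1)] 0 := by
      apply (integral_eq_zero_iff_of_nonneg_ae _ hf').mp hSz
      exact (ae_restrict_iff' measurableSet_Ioo).mpr
        (ae_of_all _ fun y hy => mul_nonneg (sq_nonneg _) hy.1.le)
    have hz2 : (fun y => |y ^ (1 - α) * f y|) =ᵐ[volume.restrict (Ioo (1/2:ℝ) 1)] 0 := by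
      have hz3 := hz.filter_mono (ae_mono (Measure.restrict_mono hsub le_rfl))
      filter_upwards [hz3, ae_restrict_mem measurableSet_Ioo] with y h1 h2
      have hy0 : (0:ℝ) < y := by have := h2.1; linarith
      simp only [Pi.zero_apply] at h1 ⊢
      have hf0 : f y = 0 := by
        have h4 : f y ^ 2 = 0 := by
          rcases mul_eq_zero.mp h1 with h | h
          · exact h
          · exact absurd h (ne_of_gt hy0)
        exact pow_eq_zero_iff (by norm_num) |>.mp h4
      rw [hf0, mul_zero, abs_zero]
    rw [integral_congr_ae hz2]
    simp [← h0]
  · -- T > 0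
    have hgint : IntegrableOn
        (fun y => (2 ^ (α - 1) / T) * (f y ^ 2 * y) + 2 ^ (α - 1) * T) (Ioo (1/2:ℝ) 1) :=
      ((hf'.mono_set hsub).const_mul _).add
        (integrableOn_const measure_Ioo_lt_top.ne)
    have hmono : ∫ y in Ioo (1/2:ℝ) 1, |y ^ (1 - α) * f y|
        ≤ ∫ y in Ioo (1/2:ℝ) 1, ((2 ^ (α - 1) / T) * (f y ^ 2 * y) + 2 ^ (α - 1) * T) := by
      apply setIntegral_mono_on habsint hgint measurableSet_Ioo
      intro y hy
      have hy2 : (1/2:ℝ) < y := hy.1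
      have hy0 : (0:ℝ) < y := by linarith
      have h1 : y ^ (1 - α) ≤ 2 ^ (α - 1) := by
        rw [hB12]
        exact Real.rpow_le_rpow_of_nonpos (by norm_num) hy2.le (by linarith)
      have hr0 : (0:ℝ) ≤ y ^ (1 - α) := (Real.rpow_pos_of_pos hy0 _).le
      have key : T * |f y| ≤ f y ^ 2 * y + T ^ 2 := by
        nlinarith [sq_nonneg (|f y| - T), sq_abs (f y), abs_nonneg (f y),
          mul_nonneg (sq_nonneg (f y)) (by linarith : (0:ℝ) ≤ y - 1/2)]
      calc |y ^ (1 - α) * f y| = y ^ (1 - α) * |f y| := by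
            rw [abs_mul, abs_of_nonneg hr0]
        _ ≤ 2 ^ (α - 1) * |f y| := mul_le_mul_of_nonneg_right h1 (abs_nonneg _)
        _ = (2 ^ (α - 1) / T) * (T * |f y|) := by field_simp
        _ ≤ (2 ^ (α - 1) / T) * (f y ^ 2 * y + T ^ 2) :=
            mul_le_mul_of_nonneg_left key (by positivity)
        _ = (2 ^ (α - 1) / T) * (f y ^ 2 * y) + 2 ^ (α - 1) * T := by
            field_simp
    have hsf : ∫ y in Ioo (1/2:ℝ) 1, f y ^ 2 * y ≤ T ^ 2 := by
      rw [hTsq]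
      apply setIntegral_mono_set hf'
      · exact (ae_restrict_iff' measurableSet_Ioo).mpr
          (ae_of_all _ fun y hy => mul_nonneg (sq_nonneg _) hy.1.le)
      · exact HasSubset.Subset.eventuallyLE hsub
    have hval : ∫ y in Ioo (1/2:ℝ) 1,
        ((2 ^ (α - 1) / T) * (f y ^ 2 * y) + 2 ^ (α - 1) * T)
        = (2 ^ (α - 1) / T) * (∫ y in Ioo (1/2:ℝ) 1, f y ^ 2 * y)
          + (2 ^ (α - 1) * T) * (1/2) := by
      rw [integral_add ((hf'.mono_set hsub).const_mul _)
        (integrableOn_const measure_Ioo_lt_top.ne), integral_const_mul,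
        setIntegral_const, Real.volume_real_Ioo]
      norm_num [ENNReal.toReal_ofReal]
      ring
    have hfin : (2 ^ (α - 1) / T) * (∫ y in Ioo (1/2:ℝ) 1, f y ^ 2 * y)
        + (2 ^ (α - 1) * T) * (1/2) ≤ 2 ^ (α - 1) * (2 * T) := by
      have h5 := mul_le_mul_of_nonneg_left hsf (le_of_lt (div_pos hBpos hTpos))
      have h6 : (2 ^ (α - 1) / T) * T ^ 2 = 2 ^ (α - 1) * T := by
        field_simp
      nlinarith
    linarith [hmono, hval.le, hfin]

/-- For `α > 1` and `u` differentiable on `(0,1)` with `u ∈ L²_x` and `D*_{x,α} u ∈ L²_x`,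
there is a constant `c` with `u = A_α^*(D*_{x,α} u) + c x^{α−1}` on `(0,1)` and
`|c| ≤ C(‖u‖ + ‖D*_{x,α} u‖)` for a constant `C` depending only on `α`. -/
theorem repr_via_Astar (α : ℝ) (hα : 1 < α) :
    ∃ C : ℝ, 0 < C ∧ ∀ u : ℝ → ℝ,
      (∀ x ∈ Ioo (0:ℝ) 1, DifferentiableAt ℝ u x) →
      MemL2x u → MemL2x (Dstar α u) →
      ∃ c : ℝ,
        (∀ x ∈ Ioo (0:ℝ) 1, u x = Astar α (Dstar α u) x + c * x ^ (α - 1)) ∧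
        |c| ≤ C * (L2xNorm u + L2xNorm (Dstar α u)) := by
  have hBpos : (0:ℝ) < 2 ^ (α - 1) := Real.rpow_pos_of_pos (by norm_num) _
  refine ⟨2 ^ (α - 1) * 4, by positivity, ?_⟩
  intro u hdiff hu hf
  set f := Dstar α u with hfdef
  obtain ⟨x₀, hx₀, hux₀⟩ := exists_pt (contOn hdiff) hu
  have hx₀' : x₀ ∈ Ioo (0:ℝ) 1 := ⟨by have := hx₀.1; linarith, hx₀.2⟩
  refine ⟨x₀ ^ (1 - α) * u x₀ - ∫ y in Ioo x₀ 1, y ^ (1 - α) * f y, ?_, ?_⟩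
  · -- the representation formula
    intro x hx
    have e1 : ∀ z ∈ Ioo (0:ℝ) 1, ∫ y in Ioo z 1, y ^ (1 - α) * f y
        = ∫ y in z..1, y ^ (1 - α) * f y := by
      intro z hz
      rw [intervalIntegral.integral_of_le hz.2.le, integral_Ioc_eq_integral_Ioo]
    have hI1 : ∫ y in Ioo x 1, y ^ (1 - α) * f y
        = (∫ y in x..x₀, y ^ (1 - α) * f y) + ∫ y in Ioo x₀ 1, y ^ (1 - α) * f y := by
      rw [e1 x hx, e1 x₀ hx₀',
        ← intervalIntegral.integral_add_adjacent_intervals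
          (aux_ii α hα hdiff hf hx ⟨hx₀'.1, hx₀'.2.le⟩)
          (aux_ii α hα hdiff hf hx₀' ⟨by norm_num, le_rfl⟩)]
    have hftc := aux_ftc α hα hdiff hf hx hx₀'
    have hcanc : x ^ (α - 1) * x ^ (1 - α) = 1 := by
      rw [← Real.rpow_add hx.1]
      norm_num
    calc u x = x ^ (α - 1) * (x ^ (1 - α) * u x) := by
          rw [← mul_assoc, hcanc, one_mul]
      _ = x ^ (α - 1) * (x₀ ^ (1 - α) * u x₀ + ∫ y in x..x₀, y ^ (1 - α) * f y) := by
          rw [hftc]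
      _ = x ^ (α - 1) * (∫ y in Ioo x 1, y ^ (1 - α) * f y)
            + (x₀ ^ (1 - α) * u x₀ - ∫ y in Ioo x₀ 1, y ^ (1 - α) * f y) * x ^ (α - 1) := by
          rw [hI1]; ring
      _ = Astar α f x
            + (x₀ ^ (1 - α) * u x₀ - ∫ y in Ioo x₀ 1, y ^ (1 - α) * f y) * x ^ (α - 1) := by
          simp only [Astar]
  · -- the bound on the constant
    have hSnn : 0 ≤ ∫ x in Ioo (0:ℝ) 1, u x ^ 2 * x :=
      setIntegral_nonneg measurableSet_Ioo (fun x hx => mul_nonneg (sq_nonneg _) hx.1.le)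
    have hNu : 0 ≤ L2xNorm u := Real.sqrt_nonneg _
    have hNf : 0 ≤ L2xNorm f := Real.sqrt_nonneg _
    -- term 1
    have habs_u : |u x₀| ≤ 3 * L2xNorm u := by
      have h9 : u x₀ ^ 2 ≤ 9 * ∫ x in Ioo (0:ℝ) 1, u x ^ 2 * x := by linarith
      have h10 := Real.sqrt_le_sqrt h9
      rw [Real.sqrt_sq_eq_abs] at h10
      calc |u x₀| ≤ Real.sqrt (9 * ∫ x in Ioo (0:ℝ) 1, u x ^ 2 * x) := h10
        _ = 3 * L2xNorm u := by
            rw [show (9:ℝ) * (∫ x in Ioo (0:ℝ) 1, u x ^ 2 * x)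
              = 3 ^ 2 * ∫ x in Ioo (0:ℝ) 1, u x ^ 2 * x by norm_num,
              Real.sqrt_mul (by positivity), Real.sqrt_sq (by norm_num)]
            rfl
    have hB12 : (2:ℝ) ^ (α - 1) = ((1:ℝ)/2) ^ (1 - α) := by
      rw [one_div, Real.inv_rpow (by norm_num : (0:ℝ) ≤ 2), ← Real.rpow_neg (by norm_num)]
      ring_nf
    have hx₀B : x₀ ^ (1 - α) ≤ 2 ^ (α - 1) := by
      rw [hB12]
      exact Real.rpow_le_rpow_of_nonpos (by norm_num) hx₀.1.le (by linarith)
    have hx₀B0 : (0:ℝ) ≤ x₀ ^ (1 - α) := (Real.rpow_pos_of_pos hx₀'.1 _).le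
    have hterm1 : |x₀ ^ (1 - α) * u x₀| ≤ 2 ^ (α - 1) * (3 * L2xNorm u) := by
      rw [abs_mul, abs_of_nonneg hx₀B0]
      exact mul_le_mul hx₀B habs_u (abs_nonneg _) hBpos.le
    -- term 2
    have habsint : IntegrableOn (fun y => |y ^ (1 - α) * f y|) (Ioo (1/2:ℝ) 1) :=
      ((aux_int α hα hdiff hf (by norm_num : (1/2:ℝ) ∈ Ioo (0:ℝ) 1)).mono_set
        Ioo_subset_Ioc_self).abs
    have hterm2 : |∫ y in Ioo x₀ 1, y ^ (1 - α) * f y|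
        ≤ 2 ^ (α - 1) * (2 * L2xNorm f) := by
      have h1 : |∫ y in Ioo x₀ 1, y ^ (1 - α) * f y|
          ≤ ∫ y in Ioo x₀ 1, |y ^ (1 - α) * f y| := by
        simpa only [Real.norm_eq_abs] using
          norm_integral_le_integral_norm (μ := volume.restrict (Ioo x₀ 1))
            (fun y => y ^ (1 - α) * f y)
      have h2 : ∫ y in Ioo x₀ 1, |y ^ (1 - α) * f y|
          ≤ ∫ y in Ioo (1/2:ℝ) 1, |y ^ (1 - α) * f y| := by
        apply setIntegral_mono_set habsint
        · exact (ae_restrict_iff' measurableSet_Ioo).mpr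
            (ae_of_all _ fun y _ => abs_nonneg _)
        · exact HasSubset.Subset.eventuallyLE (Ioo_subset_Ioo hx₀.1.le le_rfl)
      linarith [term2 α hα hdiff hf, h1, h2]
    calc |x₀ ^ (1 - α) * u x₀ - ∫ y in Ioo x₀ 1, y ^ (1 - α) * f y|
        ≤ |x₀ ^ (1 - α) * u x₀| + |∫ y in Ioo x₀ 1, y ^ (1 - α) * f y| := abs_sub _ _
      _ ≤ 2 ^ (α - 1) * (3 * L2xNorm u) + 2 ^ (α - 1) * (2 * L2xNorm f) := by
          linarith
      _ ≤ 2 ^ (α - 1) * 4 * (L2xNorm u + L2xNorm f) := by nlinarith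
end

section
/- Let α > 1 and let φ : (0,1) → ℝ be differentiable with φ ∈ L²_x and D_{x,α}φ ∈ L²_x. Then sup_{x ∈ (0,1)} |φ(x)| ≤ (2α)^{−1/2} ‖D_{x,α}φ‖_{L²_x}. -/
open MeasureTheory Set
open scoped ENNReal

open intervalIntegral Filter
open scoped Topology

private lemma young_aux (c u v : ℝ) (hc : 0 < c) : 2 * |u * v| ≤ c * u^2 + v^2 / c := by
  rw [abs_mul]
  have h0 := sq_nonneg (c * |u| - |v|)
  rw [sub_sq, mul_pow, sq_abs, sq_abs] at h0
  have h1 : 2 * (|u| * |v|) * c ≤ c * u ^ 2 * c + v ^ 2 := by nlinarith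
  calc 2 * (|u| * |v|) ≤ (c * u ^ 2 * c + v ^ 2) / c := (le_div_iff₀ hc).2 h1
    _ = c * u ^ 2 + v ^ 2 / c := by field_simp


set_option maxHeartbeats 1000000 in
/-- For `α > 1` and `φ` differentiable on `(0,1)` with `φ ∈ L²_x` and `D_{x,α} φ ∈ L²_x`,
one has the pointwise bound `|φ(x)| ≤ (2α)^{−1/2} ‖D_{x,α} φ‖_{L²_x}` on `(0,1)`. -/
theorem sup_bound_twisted (α : ℝ) (hα : 1 < α) (φ : ℝ → ℝ)
    (hdiff : ∀ x ∈ Ioo (0:ℝ) 1, DifferentiableAt ℝ φ x)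
    (hφ : MemL2x φ) (hDφ : MemL2x (Dtw α φ)) :
    ∀ x ∈ Ioo (0:ℝ) 1, |φ x| ≤ (2*α) ^ (-(1/2) : ℝ) * L2xNorm (Dtw α φ) := by
  intro x hx
  obtain ⟨hx0, hx1⟩ := hx
  set D := Dtw α φ with hDdef
  set N := L2xNorm D with hNdef
  have hα0 : (0:ℝ) < 2 * α := by linarith
  -- continuity / measurability
  have hφcont : ContinuousOn φ (Ioo (0:ℝ) 1) :=
    fun y hy => ((hdiff y hy).continuousAt).continuousWithinAt
  have hmeasD : AEStronglyMeasurable D (volume.restrict (Ioo (0:ℝ) 1)) := by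
    have h1 : AEStronglyMeasurable (deriv φ) (volume.restrict (Ioo (0:ℝ) 1)) :=
      (measurable_deriv φ).aestronglyMeasurable
    have h2 : ContinuousOn (fun y => (α / y) * φ y) (Ioo (0:ℝ) 1) :=
      (continuousOn_const.div continuousOn_id (fun y hy => hy.1.ne')).mul hφcont
    exact h1.add (h2.aestronglyMeasurable measurableSet_Ioo)
  have hmeas_g : AEStronglyMeasurable (fun y => y ^ α * D y)
      (volume.restrict (Ioo (0:ℝ) 1)) :=
    ((Real.continuous_rpow_const (by linarith : (0:ℝ) ≤ α)).measurable.aestronglyMeasurable).mul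
      hmeasD
  -- pointwise bound
  have hptwise : ∀ c : ℝ, 0 < c → ∀ y : ℝ, y ∈ Ioo (0:ℝ) 1 →
      |y ^ α * D y| ≤ (c * y ^ (2*α-1) + D y ^ 2 * y / c) / 2 := by
    intro c hc y hy
    have hy0 : (0:ℝ) < y := hy.1
    set u := y ^ ((2*α-1)/2) with hu
    set v := y ^ ((1:ℝ)/2) * D y with hv
    have huv : u * v = y ^ α * D y := by
      rw [hu, hv, show y ^ ((2*α-1)/2) * (y ^ ((1:ℝ)/2) * D y)
          = (y ^ ((2*α-1)/2) * y ^ ((1:ℝ)/2)) * D y by ring,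
        ← Real.rpow_add hy0, show (2*α-1)/2 + (1:ℝ)/2 = α by ring]
    have hu2 : u ^ 2 = y ^ (2*α-1) := by
      rw [hu, sq, ← Real.rpow_add hy0, show (2*α-1)/2 + (2*α-1)/2 = 2*α-1 by ring]
    have hv2 : v ^ 2 = D y ^ 2 * y := by
      rw [hv, mul_pow, sq, ← Real.rpow_add hy0]
      norm_num
      ring
    have := young_aux c u v hc
    rw [huv, hu2, hv2] at this
    linarith
  -- integrability on (0,1)
  have hIy1 : IntegrableOn (fun y : ℝ => y ^ (2*α-1)) (Ioo (0:ℝ) 1) :=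
    (integrableOn_Ioo_rpow_iff one_pos).2 (by linarith)
  have hbound1 : IntegrableOn (fun y => (1 * y ^ (2*α-1) + D y ^ 2 * y / 1) / 2)
      (Ioo (0:ℝ) 1) := ((hIy1.const_mul 1).add (hDφ.div_const 1)).div_const 2
  have hg_int1 : IntegrableOn (fun y => y ^ α * D y) (Ioo (0:ℝ) 1) := by
    refine Integrable.mono' hbound1 hmeas_g ?_
    rw [ae_restrict_iff' measurableSet_Ioo]
    refine ae_of_all _ fun y hy => ?_
    rw [Real.norm_eq_abs]
    exact hptwise 1 one_pos y hy
  have hg_intx : IntegrableOn (fun y => y ^ α * D y) (Ioo (0:ℝ) x) :=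
    hg_int1.mono_set (Ioo_subset_Ioo_right hx1.le)
  -- FTC on [a, x]
  have hF : ∀ a, a ∈ Ioo (0:ℝ) x →
      x ^ α * φ x - a ^ α * φ a = ∫ y in Ioc a x, y ^ α * D y := by
    intro a ha
    have hax : a ≤ x := ha.2.le
    have hsub : Set.uIcc a x ⊆ Ioo (0:ℝ) 1 := by
      rw [Set.uIcc_of_le hax]
      exact fun y hy => ⟨lt_of_lt_of_le ha.1 hy.1, lt_of_le_of_lt hy.2 hx1⟩
    have hderiv : ∀ y ∈ Set.uIcc a x,
        HasDerivAt (fun t => t ^ α * φ t) (y ^ α * D y) y := by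
      intro y hy
      have hy01 := hsub hy
      have hy0 : (0:ℝ) < y := hy01.1
      have h1 : HasDerivAt (fun t : ℝ => t ^ α) (α * y ^ (α-1)) y :=
        Real.hasDerivAt_rpow_const (Or.inl hy0.ne')
      have h2 := (hdiff y hy01).hasDerivAt
      have h3 := h1.mul h2
      refine h3.congr_deriv ?_
      symm
      have hpow : y ^ (α - 1) = y ^ α / y := Real.rpow_sub_one hy0.ne' α
      rw [hDdef]
      simp only [Dtw]
      rw [hpow]
      field_simp
      ring
    have hint : IntervalIntegrable (fun y => y ^ α * D y) volume a x := by
      rw [intervalIntegrable_iff, Set.uIoc_of_le hax]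
      exact hg_int1.mono_set fun y hy =>
        ⟨lt_trans ha.1 hy.1, lt_of_le_of_lt hy.2 hx1⟩
    have := intervalIntegral.integral_eq_sub_of_hasDerivAt hderiv hint
    rw [intervalIntegral.integral_of_le hax] at this
    linarith [this]
  -- the limit as a → 0⁺
  set L := x ^ α * φ x - ∫ y in Ioc (0:ℝ) x, y ^ α * D y with hLdef
  have hIcc : IntegrableOn (fun y => y ^ α * D y) (Icc (0:ℝ) x) := by
    rw [integrableOn_Icc_iff_integrableOn_Ioo]
    exact hg_intx
  have hcont := intervalIntegral.continuousOn_primitive (f := fun y => y ^ α * D y)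
    (a := (0:ℝ)) (b := x) (μ := volume) hIcc
  have htend0 : Tendsto (fun a => ∫ t in Ioc (0:ℝ) a, t ^ α * D t) (𝓝[>] (0:ℝ)) (𝓝 0) := by
    have h1 := (hcont 0 ⟨le_refl _, hx0.le⟩)
    have h2 : (∫ t in Ioc (0:ℝ) (0:ℝ), t ^ α * D t) = 0 := by simp
    have h3 : Tendsto (fun a => ∫ t in Ioc (0:ℝ) a, t ^ α * D t)
        (𝓝[Icc (0:ℝ) x] 0) (𝓝 (∫ t in Ioc (0:ℝ) (0:ℝ), t ^ α * D t)) := h1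
    rw [h2] at h3
    refine h3.mono_left ?_
    rw [← nhdsWithin_Ioo_eq_nhdsGT hx0]
    exact nhdsWithin_mono _ Ioo_subset_Icc_self
  have hFa : ∀ᶠ a in 𝓝[>] (0:ℝ), a ^ α * φ a = L + ∫ t in Ioc (0:ℝ) a, t ^ α * D t := by
    filter_upwards [Ioo_mem_nhdsGT hx0] with a ha
    have hsplit : (∫ y in Ioc (0:ℝ) x, y ^ α * D y)
        = (∫ y in Ioc (0:ℝ) a, y ^ α * D y) + ∫ y in Ioc a x, y ^ α * D y := by
      rw [← setIntegral_union (Set.Ioc_disjoint_Ioc_of_le le_rfl) measurableSet_Ioc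
        (hg_int1.mono_set fun y hy => ⟨hy.1, lt_of_le_of_lt (le_trans hy.2 ha.2.le) hx1⟩)
        (hg_int1.mono_set fun y hy => ⟨lt_trans ha.1 hy.1, lt_of_le_of_lt hy.2 hx1⟩),
        Set.Ioc_union_Ioc_eq_Ioc ha.1.le ha.2.le]
    have := hF a ha
    rw [hLdef]
    linarith [this, hsplit]
  have hlim : Tendsto (fun a => a ^ α * φ a) (𝓝[>] (0:ℝ)) (𝓝 L) := by
    have h1 : Tendsto (fun a => L + ∫ t in Ioc (0:ℝ) a, t ^ α * D t)
        (𝓝[>] (0:ℝ)) (𝓝 (L + 0)) := tendsto_const_nhds.add htend0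
    rw [add_zero] at h1
    exact h1.congr' (hFa.mono fun a ha => ha.symm)
  -- L = 0
  have hL0 : L = 0 := by
    by_contra hL
    have hLpos : 0 < |L| := abs_pos.2 hL
    have habs : Tendsto (fun a => |a ^ α * φ a|) (𝓝[>] (0:ℝ)) (𝓝 |L|) := hlim.abs
    have hev : ∀ᶠ a in 𝓝[>] (0:ℝ), |L| / 2 ≤ |a ^ α * φ a| :=
      habs.eventually_const_le (by linarith)
    have hev2 : ∀ᶠ a in 𝓝[>] (0:ℝ),
        L ^ 2 / 4 * a ^ (1 - 2*α) ≤ φ a ^ 2 * a := by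
      filter_upwards [hev, Ioo_mem_nhdsGT hx0] with a hba ha
      have ha0 : (0:ℝ) < a := ha.1
      have hx2 : |a ^ α * φ a| = a ^ α * |φ a| := by
        rw [abs_mul, abs_of_nonneg (Real.rpow_nonneg ha0.le α)]
      rw [hx2] at hba
      have hsq : (|L| / 2) ^ 2 ≤ (a ^ α * |φ a|) ^ 2 := by
        apply pow_le_pow_left₀ (by positivity) hba
      have h1 : (|L|/2)^2 = L^2/4 := by rw [div_pow, sq_abs]; norm_num
      have h2 : (a ^ α * |φ a|) ^ 2 = a ^ (2*α) * φ a ^ 2 := by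
        rw [mul_pow, sq_abs, sq, ← Real.rpow_add ha0, show α + α = 2*α by ring]
      rw [h1, h2] at hsq
      have hmul : L^2/4 * a ^ (1-2*α) ≤ a ^ (2*α) * φ a ^ 2 * a ^ (1-2*α) :=
        mul_le_mul_of_nonneg_right hsq (Real.rpow_nonneg ha0.le _)
      have hcan : a ^ (2*α) * φ a ^ 2 * a ^ (1-2*α) = φ a ^ 2 * a := by
        rw [show a ^ (2*α) * φ a ^ 2 * a ^ (1-2*α) = (a ^ (2*α) * a ^ (1-2*α)) * φ a ^ 2 by ring,
          ← Real.rpow_add ha0, show 2*α + (1-2*α) = (1:ℝ) by ring, Real.rpow_one]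
        ring
      rw [hcan] at hmul
      exact hmul
    obtain ⟨η, hη0, hηsub⟩ := mem_nhdsGT_iff_exists_Ioo_subset.1 hev2
    have hη0' : (0:ℝ) < η := by
      have := hη0
      simpa using this
    set η' := min η 1 with hη'
    have hη'0 : (0:ℝ) < η' := lt_min hη0' one_pos
    have hint_phi : IntegrableOn (fun a => φ a ^ 2 * a) (Ioo (0:ℝ) η') :=
      hφ.mono_set (Ioo_subset_Ioo_right (min_le_right _ _))
    have hmeas_pow : AEStronglyMeasurable (fun a : ℝ => L^2/4 * a ^ (1 - 2*α))
        (volume.restrict (Ioo (0:ℝ) η')) := by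
      apply ContinuousOn.aestronglyMeasurable _ measurableSet_Ioo
      exact continuousOn_const.mul (fun a ha => (Real.continuousAt_rpow_const a _
        (Or.inl ha.1.ne')).continuousWithinAt)
    have hint_pow : IntegrableOn (fun a : ℝ => L^2/4 * a ^ (1 - 2*α)) (Ioo (0:ℝ) η') := by
      refine Integrable.mono' hint_phi hmeas_pow ?_
      rw [ae_restrict_iff' measurableSet_Ioo]
      refine ae_of_all _ fun a ha => ?_
      have ha0 : (0:ℝ) < a := ha.1
      have hle := hηsub ⟨ha.1, lt_of_lt_of_le ha.2 (min_le_left _ _)⟩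
      have : (0:ℝ) ≤ L^2/4 * a ^ (1-2*α) := by positivity
      rw [Real.norm_eq_abs, abs_of_nonneg this]
      exact hle
    have hint_pow' : IntegrableOn (fun a : ℝ => a ^ (1 - 2*α)) (Ioo (0:ℝ) η') := by
      have hL2 : L^2/4 ≠ 0 := by positivity
      have h2 := hint_pow.const_mul (4 / L^2)
      refine IntegrableOn.congr_fun h2 (fun a _ => ?_) measurableSet_Ioo
      field_simp
    have := (integrableOn_Ioo_rpow_iff hη'0).1 hint_pow'
    linarith
  -- representation
  have hFx : x ^ α * φ x = ∫ y in Ioo (0:ℝ) x, y ^ α * D y := by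
    rw [← integral_Ioc_eq_integral_Ioo]
    have : L = 0 := hL0
    rw [hLdef] at this
    linarith
  -- the integral of the weight
  have hJ : ∫ y in Ioo (0:ℝ) x, y ^ (2*α-1) = x ^ (2*α) / (2*α) := by
    rw [← integral_Ioc_eq_integral_Ioo, ← intervalIntegral.integral_of_le hx0.le,
      integral_rpow (Or.inl (by linarith : (-1:ℝ) < 2*α-1))]
    rw [Real.zero_rpow (by intro h; nlinarith : (2*α-1+1) ≠ 0), show 2*α-1+1 = 2*α by ring]
    ring
  -- I ≤ N²
  have hNnonneg : 0 ≤ N := Real.sqrt_nonneg _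
  have hintN : (0:ℝ) ≤ ∫ y in Ioo (0:ℝ) 1, D y ^ 2 * y :=
    setIntegral_nonneg measurableSet_Ioo fun y hy => mul_nonneg (sq_nonneg _) hy.1.le
  have hN2 : N ^ 2 = ∫ y in Ioo (0:ℝ) 1, D y ^ 2 * y := by
    rw [hNdef]; exact Real.sq_sqrt hintN
  have hI : (∫ y in Ioo (0:ℝ) x, D y ^ 2 * y) ≤ N ^ 2 := by
    rw [hN2]
    exact setIntegral_mono_set hDφ ((ae_restrict_iff' measurableSet_Ioo).2
      (ae_of_all _ fun y hy => mul_nonneg (sq_nonneg _) hy.1.le))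
      ((Ioo_subset_Ioo_right hx1.le).eventuallyLE)
  have hInonneg : (0:ℝ) ≤ ∫ y in Ioo (0:ℝ) x, D y ^ 2 * y :=
    setIntegral_nonneg measurableSet_Ioo fun y hy => mul_nonneg (sq_nonneg _) hy.1.le
  -- main estimate for each c > 0
  have hmain : ∀ c : ℝ, 0 < c →
      x ^ α * |φ x| ≤ (c * (x ^ (2*α) / (2*α)) + N ^ 2 / c) / 2 := by
    intro c hc
    have hIyx : IntegrableOn (fun y : ℝ => y ^ (2*α-1)) (Ioo (0:ℝ) x) :=
      hIy1.mono_set (Ioo_subset_Ioo_right hx1.le)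
    have hIDx : IntegrableOn (fun y => D y ^ 2 * y) (Ioo (0:ℝ) x) :=
      hDφ.mono_set (Ioo_subset_Ioo_right hx1.le)
    have hGint : IntegrableOn (fun y => (c * y ^ (2*α-1) + D y ^ 2 * y / c) / 2)
        (Ioo (0:ℝ) x) := ((hIyx.const_mul c).add (hIDx.div_const c)).div_const 2
    have h1 : x ^ α * |φ x| = |∫ y in Ioo (0:ℝ) x, y ^ α * D y| := by
      rw [← hFx, abs_mul, abs_of_nonneg (Real.rpow_nonneg hx0.le α)]
    have h2 : |∫ y in Ioo (0:ℝ) x, y ^ α * D y|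
        ≤ ∫ y in Ioo (0:ℝ) x, |y ^ α * D y| := by
      have := MeasureTheory.norm_integral_le_integral_norm (μ := volume.restrict (Ioo (0:ℝ) x))
          (f := fun y => y ^ α * D y)
      simpa only [Real.norm_eq_abs] using this
    have h3 : (∫ y in Ioo (0:ℝ) x, |y ^ α * D y|)
        ≤ ∫ y in Ioo (0:ℝ) x, (c * y ^ (2*α-1) + D y ^ 2 * y / c) / 2 := by
      refine integral_mono_ae hg_intx.abs hGint ((ae_restrict_iff' measurableSet_Ioo).2
        (ae_of_all _ fun y hy => hptwise c hc y ⟨hy.1, lt_trans hy.2 hx1⟩))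
    have h4 : (∫ y in Ioo (0:ℝ) x, (c * y ^ (2*α-1) + D y ^ 2 * y / c) / 2)
        = (c * (x ^ (2*α) / (2*α)) + (∫ y in Ioo (0:ℝ) x, D y ^ 2 * y) / c) / 2 := by
      rw [MeasureTheory.integral_div, MeasureTheory.integral_add (hIyx.const_mul c) (hIDx.div_const c),
        MeasureTheory.integral_const_mul, MeasureTheory.integral_div, hJ]
    calc x ^ α * |φ x| = |∫ y in Ioo (0:ℝ) x, y ^ α * D y| := h1
      _ ≤ ∫ y in Ioo (0:ℝ) x, |y ^ α * D y| := h2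
      _ ≤ ∫ y in Ioo (0:ℝ) x, (c * y ^ (2*α-1) + D y ^ 2 * y / c) / 2 := h3
      _ = (c * (x ^ (2*α) / (2*α)) + (∫ y in Ioo (0:ℝ) x, D y ^ 2 * y) / c) / 2 := h4
      _ ≤ (c * (x ^ (2*α) / (2*α)) + N ^ 2 / c) / 2 := by gcongr
  -- conclude
  set s := Real.sqrt (2*α) with hsdef
  have hs0 : 0 < s := Real.sqrt_pos.2 hα0
  have hs2 : s ^ 2 = 2*α := Real.sq_sqrt hα0.le
  have hRHS : (2*α) ^ (-(1/2) : ℝ) * N = N / s := by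
    rw [Real.rpow_neg hα0.le, ← Real.sqrt_eq_rpow, ← hsdef, inv_mul_eq_div]
  rw [hRHS]
  have hX : (0:ℝ) < x ^ α := Real.rpow_pos_of_pos hx0 α
  have hX2 : x ^ (2*α) = (x ^ α) ^ 2 := by
    rw [show (2*α) = α*2 by ring, Real.rpow_mul hx0.le, Real.rpow_two]
  have hkey : ∀ ε : ℝ, 0 < ε → |φ x| ≤ N / s + ε := by
    intro ε hε
    set M := N + ε * s with hMdef
    have hM0 : 0 < M := by positivity
    set c := M * s / (x ^ α) with hcdef
    have hc0 : 0 < c := by positivity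
    have h := hmain c hc0
    rw [hX2] at h
    have hNM : N ≤ M := by nlinarith [mul_pos hε hs0]
    have hNs : N / s + ε = M / s := by rw [hMdef]; field_simp
    have halg : (c * ((x ^ α) ^ 2 / (2*α)) + N ^ 2 / c) / 2 ≤ (x ^ α) * (M / s) := by
      rw [hcdef, ← hs2]
      have h1 : (M * s / x ^ α) * ((x ^ α) ^ 2 / (s ^ 2)) = M * x ^ α / s := by
        field_simp
      have h2 : N ^ 2 / (M * s / x ^ α) = N ^ 2 * x ^ α / (M * s) := by
        field_simp
      rw [h1, h2]
      have h3 : N ^ 2 * x ^ α / (M * s) ≤ M * x ^ α / s := by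
        rw [div_le_div_iff₀ (by positivity) hs0]
        have hsq : N ^ 2 ≤ M ^ 2 := by nlinarith
        have hmm := mul_le_mul_of_nonneg_right hsq (mul_nonneg hX.le hs0.le)
        nlinarith [hmm]
      have h4 : (x ^ α) * (M / s) = M * x ^ α / s := by ring
      rw [h4]
      linarith
    rw [hNs]
    exact (mul_le_mul_iff_right₀ hX).1 (le_trans h halg)
  by_contra hcon
  push_neg at hcon
  have := hkey ((|φ x| - N / s) / 2) (by linarith)
  linarith
end

section
/- Let n ≥ 2 be an integer, let V be a real vector space of dimension n+1, let ḡ be a nondegenerate symmetric bilinear form on V, and let ξ ∈ V* be a covector whose ḡ-dual vector X ∈ V (defined by ḡ(X,·) = ξ) satisfies ξ(X) = 1. Define the following subspaces of the space Sym²(V*) of symmetric bilinear forms on V: V₀ := { φ ḡ : φ ∈ ℝ }; V₁ := { H ∈ Sym²(V*) : H(X,·) = 0 and tr_ḡ H = 0 }, where tr_ḡ H denotes the trace of the endomorphism of V obtained by raising one index of H with ḡ; V₂ := { φ ( (n+1) ξ⊗ξ − ḡ ) : φ ∈ ℝ }; V₃ := { a⊗ξ + ξ⊗a : a ∈ V*,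 a(X) = 0 }. Then Sym²(V*) is the internal direct sum V₀ ⊕ V₁ ⊕ V₂ ⊕ V₃, and the dimensions of these subspaces are 1, n(n+1)/2 − 1, 1 and n respectively. -/
variable {V : Type*}

open Module LinearMap

/-- The symmetrized tensor product `a ↦ a ⊗ ξ + ξ ⊗ a`, as a linear map from the dual of
`V` into bilinear forms on `V`. -/
noncomputable def symT [AddCommGroup V] [Module ℝ V] (ξ : Module.Dual ℝ V) :
    Module.Dual ℝ V →ₗ[ℝ] (V →ₗ[ℝ] V →ₗ[ℝ] ℝ) where
  toFun a := a.smulRight ξ + ξ.smulRight a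
  map_add' a b := by
    ext v w
    simp only [LinearMap.add_apply, LinearMap.smulRight_apply, smul_eq_mul,
      LinearMap.smul_apply]
    ring
  map_smul' c a := by
    ext v w
    simp only [LinearMap.add_apply, LinearMap.smulRight_apply, smul_eq_mul,
      LinearMap.smul_apply, RingHom.id_apply]
    ring

/-- Evaluation of a covector at the fixed vector `X`, as a linear map. -/
noncomputable def evalAt [AddCommGroup V] [Module ℝ V] (X : V) :
    Module.Dual ℝ V →ₗ[ℝ] ℝ where
  toFun a := a X
  map_add' a b := rfl
  map_smul' c a := rfl

/-- The subspace `V₁` of symmetric bilinear forms `H` with `H(X,·) = 0` and vanishing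
`ḡ`-trace, where the index is raised with the inverse `φ⁻¹` of `v ↦ ḡ(v,·)`. -/
noncomputable def V1sub [AddCommGroup V] [Module ℝ V]
    (φ : V ≃ₗ[ℝ] Module.Dual ℝ V) (X : V) : Submodule ℝ (V →ₗ[ℝ] V →ₗ[ℝ] ℝ) where
  carrier := {H | (∀ v w, H v w = H w v) ∧ H X = 0 ∧
    LinearMap.trace ℝ V (φ.symm.toLinearMap ∘ₗ H) = 0}
  zero_mem' := ⟨fun v w => rfl, rfl, by simp⟩
  add_mem' := by
    rintro a b ⟨ha1, ha2, ha3⟩ ⟨hb1, hb2, hb3⟩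
    refine ⟨fun v w => by simp [ha1 v w, hb1 v w], by simp [ha2, hb2], ?_⟩
    rw [LinearMap.comp_add, map_add, ha3, hb3, add_zero]
  smul_mem' := by
    rintro c a ⟨ha1, ha2, ha3⟩
    refine ⟨fun v w => by simp [ha1 v w], by simp [ha2], ?_⟩
    rw [LinearMap.comp_smul, map_smul, ha3, smul_zero]

lemma traceSR [AddCommGroup V] [Module ℝ V] [FiniteDimensional ℝ V]
    (f : Module.Dual ℝ V) (x : V) :
    LinearMap.trace ℝ V (f.smulRight x) = f x := by
  have h : f.smulRight x = dualTensorHom ℝ V V (f ⊗ₜ x) := by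
    ext v; simp [dualTensorHom_apply]
  rw [h, LinearMap.trace_eq_contract_apply, contractLeft_apply]

/-- The submodule of symmetric bilinear forms. -/
def symSub (R : Type*) (V : Type*) [CommRing R] [AddCommGroup V] [Module R V] :
    Submodule R (V →ₗ[R] V →ₗ[R] R) where
  carrier := {H | ∀ v w, H v w = H w v}
  zero_mem' := fun v w => rfl
  add_mem' := by
    rintro a b ha hb
    intro v w
    simp [ha v w, hb v w]
  smul_mem' := by
    rintro c a ha v w
    simp [ha v w]

lemma finrank_symSub [AddCommGroup V] [Module ℝ V] [FiniteDimensional ℝ V]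
    (m : ℕ) (hdim : Module.finrank ℝ V = m) :
    Module.finrank ℝ (symSub ℝ V) = m * (m + 1) / 2 := by
  classical
  let b : Basis (Fin m) ℝ V := Module.finBasisOfFinrankEq ℝ V hdim
  let M : (V →ₗ[ℝ] V →ₗ[ℝ] ℝ) ≃ₗ[ℝ] Matrix (Fin m) (Fin m) ℝ := LinearMap.toMatrix₂ b b
  let P : (Sym2 (Fin m) → ℝ) →ₗ[ℝ] Matrix (Fin m) (Fin m) ℝ :=
    { toFun := fun f => Matrix.of fun i j => f s(i, j)
      map_add' := fun f h => rfl
      map_smul' := fun c f => rfl }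
  let F : (Sym2 (Fin m) → ℝ) →ₗ[ℝ] (V →ₗ[ℝ] V →ₗ[ℝ] ℝ) := M.symm.toLinearMap ∘ₗ P
  have hFb : ∀ (f : Sym2 (Fin m) → ℝ) i j, F f (b i) (b j) = f s(i, j) := by
    intro f i j
    have : M (F f) i j = P f i j := by
      simp only [F, LinearMap.coe_comp, Function.comp_apply, LinearEquiv.coe_coe,
        M.apply_symm_apply]
    rwa [LinearMap.toMatrix₂_apply] at this
  have hker : LinearMap.ker F = ⊥ := by
    rw [LinearMap.ker_eq_bot']
    intro f hf
    funext s
    induction s using Sym2.ind with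
    | _ i j =>
      have := hFb f i j
      rw [hf] at this
      simpa using this.symm
  have hrange : LinearMap.range F = symSub ℝ V := by
    apply le_antisymm
    · rintro _ ⟨f, rfl⟩
      intro v w
      have hD : F f = (F f).flip := by
        apply LinearMap.ext_basis b b
        intro i j
        rw [hFb, LinearMap.flip_apply, hFb, Sym2.eq_swap]
      conv_lhs => rw [hD]
      rfl
    · intro H hH
      set f : Sym2 (Fin m) → ℝ :=
        Sym2.lift ⟨fun i j => H (b i) (b j), fun i j => hH (b i) (b j)⟩ with hf
      refine ⟨f, ?_⟩
      apply LinearMap.ext_basis b b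
      intro i j
      rw [hFb]
      rfl
  have h1 := LinearMap.finrank_range_add_finrank_ker (K := ℝ) (V := Sym2 (Fin m) → ℝ)
    (V₂ := V →ₗ[ℝ] V →ₗ[ℝ] ℝ) F
  rw [hker, hrange, finrank_bot, add_zero, Module.finrank_fintype_fun_eq_card] at h1
  rw [h1, Sym2.card, Fintype.card_fin, Nat.choose_two_right]
  simp [Nat.mul_comm]

set_option synthInstance.maxHeartbeats 400000 in
set_option maxHeartbeats 1000000 in
/-- Pointwise decomposition of symmetric bilinear forms (Proposition 4.1 of the paper):
if `dim V = n + 1`, `ḡ` is a nondegenerate symmetric bilinear form on `V` (nondegeneracy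
being expressed by the linear equivalence `φ : V ≃ V*` with `φ v = ḡ(v,·)`), and
`ξ ∈ V*` has `ḡ`-dual vector `X` with `ξ(X) = 1`, then every symmetric bilinear form
decomposes uniquely as a sum of elements of `V₀ = ℝ ḡ`,
`V₁ = {H symmetric : H(X,·) = 0, tr_ḡ H = 0}`, `V₂ = ℝ ((n+1) ξ⊗ξ − ḡ)` and
`V₃ = {a⊗ξ + ξ⊗a : a(X) = 0}`, and these subspaces have dimensions
`1`, `n(n+1)/2 − 1`, `1` and `n` respectively. -/
theorem symmetric_tensor_decomposition [AddCommGroup V] [Module ℝ V]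
    [FiniteDimensional ℝ V]
    (n : ℕ) (hn : 2 ≤ n) (hdim : Module.finrank ℝ V = n + 1)
    (g : V →ₗ[ℝ] V →ₗ[ℝ] ℝ) (hg : ∀ v w, g v w = g w v)
    (φ : V ≃ₗ[ℝ] Module.Dual ℝ V) (hφ : ∀ v, φ v = g v)
    (ξ : Module.Dual ℝ V) (X : V) (hXg : g X = ξ) (hXξ : ξ X = 1) :
    (∀ H : V →ₗ[ℝ] V →ₗ[ℝ] ℝ, (∀ v w, H v w = H w v) →
      ∃ H0 ∈ Submodule.span ℝ {g}, ∃ H1 ∈ V1sub φ X,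
        ∃ H2 ∈ Submodule.span ℝ {((n : ℝ) + 1) • ξ.smulRight ξ - g},
          ∃ H3 ∈ Submodule.map (symT ξ) (LinearMap.ker (evalAt X)),
            H = H0 + H1 + H2 + H3) ∧
    (∀ H0 H1 H2 H3 : V →ₗ[ℝ] V →ₗ[ℝ] ℝ,
      H0 ∈ Submodule.span ℝ {g} → H1 ∈ V1sub φ X →
      H2 ∈ Submodule.span ℝ {((n : ℝ) + 1) • ξ.smulRight ξ - g} →
      H3 ∈ Submodule.map (symT ξ) (LinearMap.ker (evalAt X)) →
      H0 + H1 + H2 + H3 = 0 → H0 = 0 ∧ H1 = 0 ∧ H2 = 0 ∧ H3 = 0) ∧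
    Module.finrank ℝ (Submodule.span ℝ {g}) = 1 ∧
    Module.finrank ℝ (V1sub φ X) = n * (n + 1) / 2 - 1 ∧
    Module.finrank ℝ
      (Submodule.span ℝ {((n : ℝ) + 1) • ξ.smulRight ξ - g} :
        Submodule ℝ (V →ₗ[ℝ] V →ₗ[ℝ] ℝ)) = 1 ∧
    Module.finrank ℝ (Submodule.map (symT ξ) (LinearMap.ker (evalAt X))) = n := by
  classical
  have hn0 : (n : ℝ) ≠ 0 := Nat.cast_ne_zero.mpr (by omega)
  have hn1 : (n : ℝ) + 1 ≠ 0 := by positivity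
  set gen2 : V →ₗ[ℝ] V →ₗ[ℝ] ℝ := ((n : ℝ) + 1) • ξ.smulRight ξ - g with hgen2
  -- basic identities
  have hsymmξ : φ.symm ξ = X := by rw [← hXg, ← hφ]; exact φ.symm_apply_apply X
  have hgXw : ∀ w, g X w = ξ w := fun w => by rw [hXg]
  have symT_app : ∀ (a : Module.Dual ℝ V) (v w : V),
      symT ξ a v w = a v * ξ w + ξ v * a w := by
    intro a v w
    simp [symT]
  have gen2_app : ∀ v w, gen2 v w = ((n : ℝ) + 1) * (ξ v * ξ w) - g v w := by
    intro v w
    simp [hgen2, mul_assoc]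
  have trg : LinearMap.trace ℝ V (φ.symm.toLinearMap ∘ₗ g) = (n : ℝ) + 1 := by
    have h : φ.symm.toLinearMap ∘ₗ g = LinearMap.id := by
      ext v
      show φ.symm (g v) = v
      rw [← hφ]; exact φ.symm_apply_apply v
    rw [h, LinearMap.trace_id, hdim]
    push_cast; ring
  have trξ : LinearMap.trace ℝ V (φ.symm.toLinearMap ∘ₗ ξ.smulRight ξ) = 1 := by
    have h : φ.symm.toLinearMap ∘ₗ ξ.smulRight ξ = ξ.smulRight X := by
      ext v
      show φ.symm (ξ v • ξ) = ξ v • X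
      rw [map_smul, hsymmξ]
    rw [h, traceSR, hXξ]
  have haφ : ∀ a : Module.Dual ℝ V, ξ (φ.symm a) = a X := by
    intro a
    have h1 : φ (φ.symm a) = a := φ.apply_symm_apply a
    calc ξ (φ.symm a) = g X (φ.symm a) := by rw [hXg]
      _ = g (φ.symm a) X := hg _ _
      _ = (φ (φ.symm a)) X := by rw [hφ]
      _ = a X := by rw [h1]
  have trsym : ∀ a : Module.Dual ℝ V,
      LinearMap.trace ℝ V (φ.symm.toLinearMap ∘ₗ symT ξ a) = 2 * a X := by
    intro a
    have h : φ.symm.toLinearMap ∘ₗ symT ξ a = a.smulRight X + ξ.smulRight (φ.symm a) := by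
      ext v
      show φ.symm (symT ξ a v) = a v • X + ξ v • φ.symm a
      simp [symT, map_add, map_smul, hsymmξ]
    rw [h, map_add, traceSR, traceSR, haφ]
    ring
  have trgen2 : LinearMap.trace ℝ V (φ.symm.toLinearMap ∘ₗ gen2) = 0 := by
    rw [hgen2, LinearMap.comp_sub, LinearMap.comp_smul, map_sub, map_smul, trg, trξ]
    simp
  -- uniqueness
  have uniq : ∀ H0 H1 H2 H3 : V →ₗ[ℝ] V →ₗ[ℝ] ℝ,
      H0 ∈ Submodule.span ℝ {g} → H1 ∈ V1sub φ X →
      H2 ∈ Submodule.span ℝ {gen2} →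
      H3 ∈ Submodule.map (symT ξ) (LinearMap.ker (evalAt X)) →
      H0 + H1 + H2 + H3 = 0 → H0 = 0 ∧ H1 = 0 ∧ H2 = 0 ∧ H3 = 0 := by
    intro K0 K1 K2 K3 h0 h1 h2 h3 hsum
    obtain ⟨c, hc⟩ := Submodule.mem_span_singleton.mp h0
    obtain ⟨d, hd⟩ := Submodule.mem_span_singleton.mp h2
    obtain ⟨a, haker, ha⟩ := h3
    have haX : a X = 0 := haker
    obtain ⟨h1s, h1X, h1tr⟩ := h1
    subst hc hd ha
    have keyw : ∀ w, (c + d * n) * ξ w + a w = 0 := by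
      intro w
      have h : ((c • g + K1 + d • gen2 + symT ξ a) X) w = 0 := by rw [hsum]; rfl
      simp only [LinearMap.add_apply, LinearMap.smul_apply, smul_eq_mul] at h
      rw [h1X] at h
      rw [gen2_app, symT_app, hgXw, hXξ, haX] at h
      simp only [LinearMap.zero_apply] at h
      linear_combination h
    have hcd : c + d * n = 0 := by
      have h := keyw X
      rw [hXξ, haX] at h
      linarith
    have ha0 : a = 0 := by
      ext w
      have h := keyw w
      rw [hcd] at h
      simpa using h
    have htr : c * ((n : ℝ) + 1) = 0 := by
      have h := congrArg (fun F => LinearMap.trace ℝ V (φ.symm.toLinearMap ∘ₗ F)) hsum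
      simp only [LinearMap.comp_add, map_add, LinearMap.comp_smul, map_smul,
        smul_eq_mul, LinearMap.comp_zero, map_zero] at h
      rw [trg, trgen2, h1tr, trsym, haX] at h
      linarith
    have hc0 : c = 0 := by
      rcases mul_eq_zero.mp htr with h | h
      · exact h
      · exact absurd h hn1
    have hd0 : d = 0 := by
      have : d * n = 0 := by rw [hc0] at hcd; linarith
      rcases mul_eq_zero.mp this with h | h
      · exact h
      · exact absurd h hn0
    have hK1 : K1 = 0 := by
      rw [hc0, hd0, ha0] at hsum
      simpa using hsum
    exact ⟨by rw [hc0, zero_smul], hK1, by rw [hd0, zero_smul], by rw [ha0, map_zero]⟩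
  -- existence
  have exi : ∀ H : V →ₗ[ℝ] V →ₗ[ℝ] ℝ, (∀ v w, H v w = H w v) →
      ∃ H0 ∈ Submodule.span ℝ {g}, ∃ H1 ∈ V1sub φ X,
        ∃ H2 ∈ Submodule.span ℝ {gen2},
          ∃ H3 ∈ Submodule.map (symT ξ) (LinearMap.ker (evalAt X)),
            H = H0 + H1 + H2 + H3 := by
    intro H hH
    set t : ℝ := H X X with ht
    set s : ℝ := LinearMap.trace ℝ V (φ.symm.toLinearMap ∘ₗ H) with hs
    set a : Module.Dual ℝ V := H X - t • ξ with hadef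
    have haw : ∀ w, a w = H X w - t * ξ w := by
      intro w; simp [hadef]
    have haX : a X = 0 := by rw [haw, hXξ]; ring
    set c : ℝ := s / ((n : ℝ) + 1) with hcdef
    set d : ℝ := (t - c) / n with hddef
    have hcn : c * ((n : ℝ) + 1) = s := by
      rw [hcdef]; field_simp
    have hdn : d * (n : ℝ) = t - c := by
      rw [hddef]; field_simp
    refine ⟨c • g, Submodule.mem_span_singleton.mpr ⟨c, rfl⟩,
      H - c • g - d • gen2 - symT ξ a, ⟨?_, ?_, ?_⟩,
      d • gen2, Submodule.mem_span_singleton.mpr ⟨d, rfl⟩,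
      symT ξ a, ⟨a, haX, rfl⟩, by abel⟩
    · intro v w
      simp only [LinearMap.sub_apply, LinearMap.smul_apply, smul_eq_mul]
      rw [gen2_app, gen2_app, symT_app, symT_app, hH v w, hg v w]
      ring
    · ext w
      simp only [LinearMap.sub_apply, LinearMap.smul_apply, smul_eq_mul,
        LinearMap.zero_apply]
      rw [gen2_app, symT_app, hgXw, hXξ, haX, haw]
      linear_combination (- ξ w) * hdn
    · have hsplit : φ.symm.toLinearMap ∘ₗ (H - c • g - d • gen2 - symT ξ a)
          = φ.symm.toLinearMap ∘ₗ H - c • (φ.symm.toLinearMap ∘ₗ g)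
            - d • (φ.symm.toLinearMap ∘ₗ gen2) - φ.symm.toLinearMap ∘ₗ symT ξ a := by
        rw [LinearMap.comp_sub, LinearMap.comp_sub, LinearMap.comp_sub,
          LinearMap.comp_smul, LinearMap.comp_smul]
      rw [hsplit, map_sub, map_sub, map_sub, map_smul, map_smul, trg, trgen2, trsym,
        haX, ← hs, smul_eq_mul, smul_eq_mul, hcn]
      ring
  -- dimension of V0
  have hg0 : g ≠ 0 := by
    intro h
    have h1 : g X X = 1 := by rw [hXg, hXξ]
    rw [h] at h1
    simpa using h1
  have d0 : Module.finrank ℝ (Submodule.span ℝ {g} :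
      Submodule ℝ (V →ₗ[ℝ] V →ₗ[ℝ] ℝ)) = 1 := finrank_span_singleton (K := ℝ) (V := V →ₗ[ℝ] V →ₗ[ℝ] ℝ) hg0
  -- dimension of V2
  have hgen20 : gen2 ≠ 0 := by
    intro h
    have h1 : gen2 X X = (n : ℝ) := by
      rw [gen2_app, hgXw, hXξ]; ring
    rw [h] at h1
    simp only [LinearMap.zero_apply] at h1
    exact hn0 h1.symm
  have d2 : Module.finrank ℝ (Submodule.span ℝ {gen2} :
      Submodule ℝ (V →ₗ[ℝ] V →ₗ[ℝ] ℝ)) = 1 := finrank_span_singleton (K := ℝ) (V := V →ₗ[ℝ] V →ₗ[ℝ] ℝ) hgen20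
  -- dimension of V3
  have d3 : Module.finrank ℝ (Submodule.map (symT ξ) (LinearMap.ker (evalAt X))) = n := by
    have hK : Module.finrank ℝ (LinearMap.ker (evalAt X) :
        Submodule ℝ (Module.Dual ℝ V)) = n := by
      have h := LinearMap.finrank_range_add_finrank_ker (evalAt (V := V) X)
      have hsurj : LinearMap.range (evalAt (V := V) X) = ⊤ := by
        rw [LinearMap.range_eq_top]
        intro r
        exact ⟨r • ξ, by show (r • ξ) X = r; rw [LinearMap.smul_apply, hXξ]; simp⟩
      have hdual : Module.finrank ℝ (Module.Dual ℝ V) = n + 1 := by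
        rw [← φ.finrank_eq, hdim]
      rw [hsurj, finrank_top, hdual, Module.finrank_self] at h
      omega
    set Fc : (LinearMap.ker (evalAt (V := V) X) : Submodule ℝ (Module.Dual ℝ V))
        →ₗ[ℝ] (V →ₗ[ℝ] V →ₗ[ℝ] ℝ) :=
      (symT ξ).comp (LinearMap.ker (evalAt (V := V) X)).subtype with hFc
    have hr : LinearMap.range Fc
        = Submodule.map (symT ξ) (LinearMap.ker (evalAt X)) := by
      rw [hFc, LinearMap.range_comp, Submodule.range_subtype]
    have hk0 : Function.Injective Fc := by
      intro m m' hmm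
      apply Subtype.ext
      ext w
      have h1 : symT ξ (m : Module.Dual ℝ V) X w
          = symT ξ (m' : Module.Dual ℝ V) X w := by
        have : Fc m X w = Fc m' X w := by rw [hmm]
        exact this
      rw [symT_app, symT_app] at h1
      have hmX : (m : Module.Dual ℝ V) X = 0 := m.2
      have hmX' : (m' : Module.Dual ℝ V) X = 0 := m'.2
      rw [hmX, hmX', hXξ] at h1
      simpa using h1
    have hcomp := LinearMap.finrank_range_of_inj hk0
    rw [hr] at hcomp
    rw [hcomp, hK]
  -- dimension of V1
  have d1 : Module.finrank ℝ (V1sub φ X) = n * (n + 1) / 2 - 1 := by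
    set W0 : Submodule ℝ (V →ₗ[ℝ] V →ₗ[ℝ] ℝ) := Submodule.span ℝ {g} with hW0
    set W2 : Submodule ℝ (V →ₗ[ℝ] V →ₗ[ℝ] ℝ) := Submodule.span ℝ {gen2} with hW2
    set W3 : Submodule ℝ (V →ₗ[ℝ] V →ₗ[ℝ] ℝ) :=
      Submodule.map (symT ξ) (LinearMap.ker (evalAt X)) with hW3
    have hsup : V1sub φ X ⊔ (W0 ⊔ W2 ⊔ W3) = symSub ℝ V := by
      apply le_antisymm
      · apply sup_le
        · intro H hH
          exact hH.1
        · apply sup_le (sup_le ?_ ?_) ?_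
          · rw [hW0, Submodule.span_le, Set.singleton_subset_iff]
            exact hg
          · rw [hW2, Submodule.span_le, Set.singleton_subset_iff]
            intro v w
            rw [gen2_app, gen2_app, hg v w]
            ring
          · rintro _ ⟨a, -, rfl⟩
            intro v w
            rw [symT_app, symT_app]
            ring
      · intro H hH
        obtain ⟨H0, m0, H1, m1, H2, m2, H3, m3, rfl⟩ := exi H hH
        exact Submodule.add_mem _
          (Submodule.add_mem _
            (Submodule.add_mem _
              (Submodule.mem_sup_right (Submodule.mem_sup_left (Submodule.mem_sup_left m0)))
              (Submodule.mem_sup_left m1))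
            (Submodule.mem_sup_right (Submodule.mem_sup_left (Submodule.mem_sup_right m2))))
          (Submodule.mem_sup_right (Submodule.mem_sup_right m3))
    have hinf1 : V1sub φ X ⊓ (W0 ⊔ W2 ⊔ W3) = ⊥ := by
      rw [eq_bot_iff]
      rintro H ⟨hHV1, hHW⟩
      obtain ⟨y, hy, z, hz, hyz⟩ := Submodule.mem_sup.mp hHW
      obtain ⟨p, hp, q, hq, hpq⟩ := Submodule.mem_sup.mp hy
      have hzero : p + (-H) + q + z = 0 := by
        rw [← hyz, ← hpq]; abel
      have := (uniq p (-H) q z hp (Submodule.neg_mem (M := V →ₗ[ℝ] V →ₗ[ℝ] ℝ) _ hHV1) hq hz hzero).2.1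
      rw [Submodule.mem_bot]
      exact (neg_eq_zero (α := V →ₗ[ℝ] V →ₗ[ℝ] ℝ) (a := H)).mp this
    have hinf0 : W0 ⊓ W2 = ⊥ := by
      rw [eq_bot_iff]
      rintro H ⟨h0, h2⟩
      rw [Submodule.mem_bot]
      exact (uniq H 0 (-H) 0 h0 (zero_mem _) (Submodule.neg_mem (M := V →ₗ[ℝ] V →ₗ[ℝ] ℝ) _ h2) (zero_mem _) (by abel)).1
    have hinf02 : (W0 ⊔ W2) ⊓ W3 = ⊥ := by
      rw [eq_bot_iff]
      rintro H ⟨hsup', hW3'⟩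
      obtain ⟨p, hp, q, hq, hpq⟩ := Submodule.mem_sup.mp hsup'
      have hzero : p + 0 + q + (-H) = 0 := by rw [← hpq]; abel
      have := (uniq p 0 q (-H) hp (zero_mem _) hq (Submodule.neg_mem (M := V →ₗ[ℝ] V →ₗ[ℝ] ℝ) _ hW3') hzero).2.2.2
      rw [Submodule.mem_bot]
      exact (neg_eq_zero (α := V →ₗ[ℝ] V →ₗ[ℝ] ℝ) (a := H)).mp this
    have e02 := Submodule.finrank_sup_add_finrank_inf_eq (K := ℝ) (V := V →ₗ[ℝ] V →ₗ[ℝ] ℝ) W0 W2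
    rw [hinf0, finrank_bot, add_zero, d0, d2] at e02
    have e023 := Submodule.finrank_sup_add_finrank_inf_eq (K := ℝ) (V := V →ₗ[ℝ] V →ₗ[ℝ] ℝ) (W0 ⊔ W2) W3
    rw [hinf02, finrank_bot, add_zero, e02, d3] at e023
    have eall := Submodule.finrank_sup_add_finrank_inf_eq (K := ℝ) (V := V →ₗ[ℝ] V →ₗ[ℝ] ℝ) (V1sub φ X) (W0 ⊔ W2 ⊔ W3)
    rw [hinf1, finrank_bot, add_zero, hsup, finrank_symSub (n + 1) hdim, e023] at eall
    obtain ⟨k, hk⟩ := Nat.even_mul_succ_self n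
    have hmul : (n + 1) * (n + 1 + 1) = n * (n + 1) + (n + 1) + (n + 1) := by ring
    omega
  exact ⟨exi, uniq, d0, d1, d2, d3⟩
end
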